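/- Let Γ = Γ_M(D,k) be a fine grading on M_n(F) obtained from a division grading on D = M_ℓ(F) with support T and bicharacter β, where n = kℓ. Then the Weyl group of Γ is isomorphic to T^{k-1} ⋊ (Aut(T,β) × Sym(k)), where T^{k-1} is identified with T^k/T (T embedded diagonally) and Aut(T,β) and Sym(k) act on it componentwise and by permutation respectively. -/

import Mathlib

/-- The subgroup of `ℤ^k` of tuples with zero sum. -/
def sumZero (k : ℕ) : AddSubgroup (Fin k → ℤ) where
  carrier := {x | ∑ i, x i = 0}
  zero_mem' := by simp
  add_mem' := by
    intro a b ha hb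
    simp only [Set.mem_setOf_eq, Pi.add_apply, Finset.sum_add_distrib] at *
    rw [ha, hb, add_zero]
  neg_mem' := by
    intro a ha
    simp only [Set.mem_setOf_eq, Pi.neg_apply, Finset.sum_neg_distrib] at *
    rw [ha, neg_zero]

/-- The multiplicative group structure on `AddAut A` (composition), as in the older Mathlib. -/
instance addAutMulGroup (A : Type*) [Add A] : Group (AddAut A) where
  mul g h := AddEquiv.trans h g
  one := AddEquiv.refl _
  inv := AddEquiv.symm
  mul_assoc _ _ _ := rfl
  one_mul _ := rfl
  mul_one _ := rfl
  inv_mul_cancel := AddEquiv.self_trans_symm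

/-- The fine grading `Γ_M(D,k)` on `M_k(D)`, realized over its universal group
`ℤ₀^k × T`: the component of degree `g` is spanned by the matrices `E_{ij} X_t`
with `g̃_i - g̃_j + deg t = g`. -/
def matrixFineGrading {F : Type*} [Field F] {ℓ k : ℕ} {T : Type*} [AddCommGroup T]
    (X : T → (Matrix (Fin ℓ) (Fin ℓ) F)ˣ) :
    (↥(sumZero k) × T) → Submodule F (Matrix (Fin k) (Fin k) (Matrix (Fin ℓ) (Fin ℓ) F)) :=
  fun g => Submodule.span F
    {m | ∃ (i j : Fin k) (t : T),
      (g.1 : Fin k → ℤ) = Pi.single i 1 - Pi.single j 1 ∧ g.2 = t ∧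
      m = Matrix.single i j (X t : Matrix (Fin ℓ) (Fin ℓ) F)}

open Matrix

namespace WeylAux
set_option linter.unusedSectionVars false

theorem mem_sumZero {k : ℕ} {x : Fin k → ℤ} : x ∈ sumZero k ↔ ∑ i, x i = 0 := Iff.rfl

variable {F : Type*} [Field F] {ℓ k : ℕ} {T : Type*} [AddCommGroup T]

/-- the root elements of `sumZero k` -/
def δ (i j : Fin k) : ↥(sumZero k) :=
  ⟨Pi.single i 1 - Pi.single j 1, by
    simp [mem_sumZero, Finset.sum_sub_distrib, Finset.sum_pi_single]⟩

@[simp] theorem δ_val (i j : Fin k) :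
    (δ i j : Fin k → ℤ) = Pi.single i 1 - Pi.single j 1 := rfl

@[simp] theorem δ_same (i : Fin k) : δ i i = 0 := by
  ext; simp [δ]

theorem single_sub_single_eq_iff {i j i' j' : Fin k} (hij : i ≠ j) :
    (Pi.single i 1 - Pi.single j 1 : Fin k → ℤ) = Pi.single i' 1 - Pi.single j' 1 ↔
      (i = i' ∧ j = j') := by
  constructor
  · intro h
    have key : ∀ x : Fin k, ((if x = i then (1:ℤ) else 0) - if x = j then 1 else 0)
        = ((if x = i' then (1:ℤ) else 0) - if x = j' then 1 else 0) := fun x => by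
      simpa [Pi.sub_apply, Pi.single_apply] using congrFun h x
    have hii : i = i' := by
      by_contra hii
      have h1 := key i
      rw [if_pos rfl, if_neg hij, if_neg hii] at h1
      split_ifs at h1 <;> omega
    subst hii
    refine ⟨rfl, ?_⟩
    by_contra hjj
    have h2 := key j
    simp only [Ne.symm hij, hjj, if_false, if_pos rfl, if_true, eq_self_iff_true] at h2
    omega
  · rintro ⟨rfl, rfl⟩; rfl

theorem δ_eq_zero_iff {i j : Fin k} : δ i j = 0 ↔ i = j := by
  constructor
  · intro h
    by_contra hij
    have := congrFun (congrArg (Subtype.val) h) i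
    simp [Pi.single_apply, Ne.symm hij] at this
  · rintro rfl; simp

theorem δ_eq_δ_iff {i j i' j' : Fin k} (hij : i ≠ j) :
    δ i j = δ i' j' ↔ (i = i' ∧ j = j') := by
  rw [Subtype.ext_iff, δ_val, δ_val, single_sub_single_eq_iff hij]

variable (X : T → (Matrix (Fin ℓ) (Fin ℓ) F)ˣ)

/-- `E_{ij} X_t` -/
def E (i j : Fin k) (t : T) : Matrix (Fin k) (Fin k) (Matrix (Fin ℓ) (Fin ℓ) F) :=
  single i j (X t : Matrix (Fin ℓ) (Fin ℓ) F)

theorem grading_eq (g : ↥(sumZero k) × T) :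
    matrixFineGrading X g = Submodule.span F
      {m | ∃ i j : Fin k, (g.1 : Fin k → ℤ) = Pi.single i 1 - Pi.single j 1 ∧
        m = E X i j g.2} := by
  unfold matrixFineGrading
  congr 1
  ext m
  constructor
  · rintro ⟨i, j, t, h1, rfl, h3⟩; exact ⟨i, j, h1, h3⟩
  · rintro ⟨i, j, h1, h3⟩; exact ⟨i, j, g.2, h1, rfl, h3⟩

theorem grading_root {i j : Fin k} (hij : i ≠ j) (t : T) :
    matrixFineGrading X (δ i j, t) = Submodule.span F {E X i j t} := by
  rw [grading_eq]
  congr 1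
  ext m
  simp only [Set.mem_setOf_eq, Set.mem_singleton_iff]
  constructor
  · rintro ⟨i', j', h1, rfl⟩
    obtain ⟨rfl, rfl⟩ := (single_sub_single_eq_iff hij).1 h1
    rfl
  · rintro rfl; exact ⟨i, j, rfl, rfl⟩

theorem grading_zero (t : T) :
    matrixFineGrading X ((0 : ↥(sumZero k)), t) = Submodule.span F (Set.range fun i : Fin k => E X i i t) := by
  rw [grading_eq]
  congr 1
  ext m
  simp only [Set.mem_setOf_eq, Set.mem_range]
  constructor
  · rintro ⟨i, j, h1, rfl⟩
    have : i = j := by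
      by_contra hij
      have := congrFun h1 i
      simp [Pi.single_apply, Ne.symm hij] at this
    subst this
    exact ⟨i, rfl⟩
  · rintro ⟨i, rfl⟩
    exact ⟨i, i, by simp, rfl⟩

theorem grading_bot {g : ↥(sumZero k) × T}
    (h : ∀ i j : Fin k, (g.1 : Fin k → ℤ) ≠ Pi.single i 1 - Pi.single j 1) :
    matrixFineGrading X g = ⊥ := by
  rw [grading_eq]
  convert Submodule.span_empty
  ext m
  simp only [Set.mem_setOf_eq, Set.mem_empty_iff_false, iff_false]
  rintro ⟨i, j, h1, -⟩
  exact h i j h1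


section Facts

theorem smul_cancel {M : Type*} [AddCommGroup M] [Module F M] {a b : F} {m : M}
    (hm : m ≠ 0) (h : a • m = b • m) : a = b := by
  by_contra hab
  have : (a - b) • m = 0 := by rw [sub_smul, h, sub_self]
  rcases smul_eq_zero.1 this with h' | h'
  · exact hab (sub_eq_zero.1 h')
  · exact hm h'

theorem nontrivialD (hl : 0 < ℓ) : Nontrivial (Matrix (Fin ℓ) (Fin ℓ) F) := by
  haveI : Nonempty (Fin ℓ) := Fin.pos_iff_nonempty.mp hl
  infer_instance

theorem X_ne_zero (hl : 0 < ℓ) (t : T) : (X t : Matrix (Fin ℓ) (Fin ℓ) F) ≠ 0 := by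
  haveI := nontrivialD (F := F) hl
  exact Units.ne_zero (X t)

theorem E_ne_zero (hl : 0 < ℓ) (i j : Fin k) (t : T) : E X i j t ≠ 0 := by
  intro h
  exact X_ne_zero X hl t (by simpa [E] using congrFun (congrFun h i) j)

theorem smul_E (c : F) (i j : Fin k) (t : T) :
    c • E X i j t = single i j (c • (X t : Matrix (Fin ℓ) (Fin ℓ) F)) :=
  smul_single c i j _

theorem E_mul_same (i j l : Fin k) (t s : T) :
    E X i j t * E X j l s
      = single i l ((X t : Matrix (Fin ℓ) (Fin ℓ) F) * (X s : Matrix (Fin ℓ) (Fin ℓ) F)) :=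
  by rw [E, E, single_mul_single_same]

theorem E_mul_ne {j j' : Fin k} (h : j ≠ j') (i l : Fin k) (t s : T) :
    E X i j t * E X j' l s = 0 :=
  by rw [E, E, single_mul_single_of_ne (h := h)]

theorem diag_entry_sum (v : Fin k → Matrix (Fin ℓ) (Fin ℓ) F) (i : Fin k) :
    (∑ j, single j j (v j)) i i = v i := by
  rw [Matrix.sum_apply]
  rw [Finset.sum_eq_single i]
  · simp
  · intro j _ hj
    simp [Matrix.single, Matrix.of_apply, hj]
  · simp

theorem diag_sum_eq_zero {c : Fin k → F} {v : Matrix (Fin ℓ) (Fin ℓ) F}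
    (hv : v ≠ 0) (h : ∑ i, c i • single i i v = 0) : ∀ i, c i = 0 := by
  intro i
  have h2 : (∑ j, single j j (c j • v)) = 0 := by
    rw [← h]; congr 1; ext j : 1; rw [smul_single]
  have h3 := congrFun (congrFun h2 i) i
  rw [diag_entry_sum] at h3
  simpa [smul_eq_zero, hv] using h3

theorem sum_diag_mul (cu cv : Fin k → F) (u v : T) :
    (∑ i, cu i • E X i i u) * (∑ j, cv j • E X j j v)
      = ∑ i, (cu i * cv i) •
          single i i ((X u : Matrix (Fin ℓ) (Fin ℓ) F) * (X v : Matrix (Fin ℓ) (Fin ℓ) F)) := by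
  rw [Finset.sum_mul_sum]
  refine Finset.sum_congr rfl fun i _ => ?_
  rw [Finset.sum_eq_single i]
  · rw [Algebra.smul_mul_assoc, Algebra.mul_smul_comm, E_mul_same, smul_smul]
  · intro j _ hj
    rw [Algebra.smul_mul_assoc, Algebra.mul_smul_comm, E_mul_ne X (Ne.symm hj)]
    simp
  · simp

end Facts

section Sigma

variable (sigma : T → T → Fˣ)

theorem sigma_zero_left (hl : 0 < ℓ)
    (hσ : ∀ u v : T, (X u : Matrix (Fin ℓ) (Fin ℓ) F) * (X v : Matrix (Fin ℓ) (Fin ℓ) F)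
      = (sigma u v : F) • (X (u + v) : Matrix (Fin ℓ) (Fin ℓ) F))
    (hone : X 0 = 1) (v : T) : sigma 0 v = 1 := by
  have h := hσ 0 v
  rw [hone, zero_add] at h
  ext
  exact (smul_cancel (X_ne_zero X hl v) (by rw [← h]; simp)).symm

theorem sigma_zero_right (hl : 0 < ℓ)
    (hσ : ∀ u v : T, (X u : Matrix (Fin ℓ) (Fin ℓ) F) * (X v : Matrix (Fin ℓ) (Fin ℓ) F)
      = (sigma u v : F) • (X (u + v) : Matrix (Fin ℓ) (Fin ℓ) F))
    (hone : X 0 = 1) (v : T) : sigma v 0 = 1 := by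
  have h := hσ v 0
  rw [hone, add_zero] at h
  ext
  exact (smul_cancel (X_ne_zero X hl v) (by rw [← h]; simp)).symm

theorem sigma_cocycle (hl : 0 < ℓ)
    (hσ : ∀ u v : T, (X u : Matrix (Fin ℓ) (Fin ℓ) F) * (X v : Matrix (Fin ℓ) (Fin ℓ) F)
      = (sigma u v : F) • (X (u + v) : Matrix (Fin ℓ) (Fin ℓ) F))
    (u v w : T) :
    sigma u v * sigma (u + v) w = sigma v w * sigma u (v + w) := by
  have h1 : ((X u : Matrix (Fin ℓ) (Fin ℓ) F) * X v) * X w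
      = ((sigma u v : F) * (sigma (u+v) w : F)) • (X (u + v + w) : Matrix (Fin ℓ) (Fin ℓ) F) := by
    rw [hσ, Algebra.smul_mul_assoc, hσ, smul_smul]
  have h2 : ((X u : Matrix (Fin ℓ) (Fin ℓ) F) * X v) * X w
      = ((sigma v w : F) * (sigma u (v+w) : F)) • (X (u + v + w) : Matrix (Fin ℓ) (Fin ℓ) F) := by
    rw [mul_assoc, hσ, Algebra.mul_smul_comm, hσ, smul_smul, add_assoc]
  ext
  push_cast
  exact smul_cancel (X_ne_zero X hl _) (h1.symm.trans h2)

theorem beta_sigma (hl : 0 < ℓ)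
    (hσ : ∀ u v : T, (X u : Matrix (Fin ℓ) (Fin ℓ) F) * (X v : Matrix (Fin ℓ) (Fin ℓ) F)
      = (sigma u v : F) • (X (u + v) : Matrix (Fin ℓ) (Fin ℓ) F))
    (β : T → T → Fˣ)
    (hcomm : ∀ u v : T, (X u : Matrix (Fin ℓ) (Fin ℓ) F) * (X v : Matrix (Fin ℓ) (Fin ℓ) F)
      = (β u v : F) • ((X v : Matrix (Fin ℓ) (Fin ℓ) F) * (X u : Matrix (Fin ℓ) (Fin ℓ) F)))
    (u v : T) : β u v * sigma v u = sigma u v := by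
  have h := hcomm u v
  rw [hσ, hσ, smul_smul, add_comm v u] at h
  ext
  push_cast
  exact (smul_cancel (X_ne_zero X hl _) h).symm

theorem Xinv_val (hone : X 0 = 1)
    (hσ : ∀ u v : T, (X u : Matrix (Fin ℓ) (Fin ℓ) F) * (X v : Matrix (Fin ℓ) (Fin ℓ) F)
      = (sigma u v : F) • (X (u + v) : Matrix (Fin ℓ) (Fin ℓ) F))
    (v : T) :
    (((X v)⁻¹ : (Matrix (Fin ℓ) (Fin ℓ) F)ˣ) : Matrix (Fin ℓ) (Fin ℓ) F)
      = ((sigma v (-v) : F)⁻¹) • (X (-v) : Matrix (Fin ℓ) (Fin ℓ) F) := by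
  have key : (X v : Matrix (Fin ℓ) (Fin ℓ) F)
      * (((sigma v (-v) : F)⁻¹) • (X (-v) : Matrix (Fin ℓ) (Fin ℓ) F)) = 1 := by
    rw [Algebra.mul_smul_comm, hσ, add_neg_cancel, hone, smul_smul]
    simp
  calc (((X v)⁻¹ : (Matrix (Fin ℓ) (Fin ℓ) F)ˣ) : Matrix (Fin ℓ) (Fin ℓ) F)
      = ((X v)⁻¹ : (Matrix (Fin ℓ) (Fin ℓ) F)ˣ) * ((X v : Matrix (Fin ℓ) (Fin ℓ) F)
          * (((sigma v (-v) : F)⁻¹) • (X (-v) : Matrix (Fin ℓ) (Fin ℓ) F))) := by rw [key, mul_one]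
    _ = _ := by rw [← mul_assoc, Units.inv_mul, one_mul]

end Sigma


section Cocycle

open CategoryTheory

universe u

/-- A symmetric normalized 2-cocycle on an abelian group with values in a divisible
abelian group is a coboundary. -/
theorem symm_cocycle_coboundary {G A : Type u} [AddCommGroup G] [CommGroup A]
    (hdiv : ∀ (a : A) (n : ℕ), 0 < n → ∃ b, b ^ n = a)
    (τ : G → G → A)
    (hcoc : ∀ u v w, τ u v * τ (u + v) w = τ v w * τ u (v + w))
    (hsym : ∀ u v, τ u v = τ v u)
    (hn : ∀ v, τ 0 v = 1) :
    ∃ c : G → A, ∀ u v, c u * c v = c (u + v) * τ u v := by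
  classical
  have hn' : ∀ v, τ v 0 = 1 := fun v => (hsym v 0).trans (hn v)
  -- roots for integer powers
  have hroot : ∀ (a : A) (n : ℤ), n ≠ 0 → ∃ b : A, b ^ n = a := by
    intro a n hne
    rcases lt_or_gt_of_ne hne with hneg | hpos
    · obtain ⟨b, hb⟩ := hdiv a (-n).toNat (by omega)
      refine ⟨b⁻¹, ?_⟩
      rw [_root_.inv_zpow, ← _root_.zpow_neg, ← hb, ← zpow_natCast]
      congr 1
      omega
    · obtain ⟨b, hb⟩ := hdiv a n.toNat (by omega)
      refine ⟨b, ?_⟩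
      rw [← hb, ← zpow_natCast]
      congr 1
      omega
  -- the twisted product group structure on `G × A`
  letI : CommGroup (G × A) :=
    { mul := fun x y => (x.1 + y.1, x.2 * y.2 * τ x.1 y.1)
      one := ((0 : G), (1 : A))
      inv := fun x => (-x.1, (x.2 * τ x.1 (-x.1))⁻¹)
      mul_assoc := by
        rintro ⟨x1, x2⟩ ⟨y1, y2⟩ ⟨z1, z2⟩
        refine Prod.ext (add_assoc _ _ _) ?_
        show x2 * y2 * τ x1 y1 * z2 * τ (x1 + y1) z1
            = x2 * (y2 * z2 * τ y1 z1) * τ x1 (y1 + z1)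
        have := hcoc x1 y1 z1
        calc x2 * y2 * τ x1 y1 * z2 * τ (x1 + y1) z1
            = x2 * y2 * z2 * (τ x1 y1 * τ (x1 + y1) z1) := by
              simp only [mul_assoc, mul_comm, mul_left_comm]
          _ = x2 * y2 * z2 * (τ y1 z1 * τ x1 (y1 + z1)) := by rw [this]
          _ = x2 * (y2 * z2 * τ y1 z1) * τ x1 (y1 + z1) := by
              simp only [mul_assoc, mul_comm, mul_left_comm]
      one_mul := by
        rintro ⟨x1, x2⟩
        refine Prod.ext (zero_add _) ?_
        show 1 * x2 * τ 0 x1 = x2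
        rw [hn, one_mul, mul_one]
      mul_one := by
        rintro ⟨x1, x2⟩
        refine Prod.ext (add_zero _) ?_
        show x2 * 1 * τ x1 0 = x2
        rw [hn', mul_one, mul_one]
      inv_mul_cancel := by
        rintro ⟨x1, x2⟩
        refine Prod.ext (neg_add_cancel _) ?_
        show (x2 * τ x1 (-x1))⁻¹ * x2 * τ (-x1) x1 = 1
        rw [hsym (-x1) x1]
        group
      mul_comm := by
        rintro ⟨x1, x2⟩ ⟨y1, y2⟩
        refine Prod.ext (add_comm _ _) ?_
        show x2 * y2 * τ x1 y1 = y2 * x2 * τ y1 x1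
        rw [hsym, mul_comm x2 y2] }
  letI : DivisibleBy (Additive A) ℤ :=
    { div := fun a n =>
        if h : n = 0 then 0 else Additive.ofMul (Classical.choose (hroot a.toMul n h))
      div_zero := fun a => by simp
      div_cancel := by
        intro n a hn0
        simp only [dif_neg hn0]
        rw [← ofMul_zpow, Classical.choose_spec (hroot a.toMul n hn0)]
        rfl }
  haveI : CategoryTheory.Injective (AddCommGrpCat.of (Additive A)) :=
    AddCommGrpCat.injective_of_divisible _
  -- the embedding of A into the twisted product
  let m : A →* (G × A) :=
    { toFun := fun a => ((0 : G), a)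
      map_one' := rfl
      map_mul' := by
        intro a b
        show ((0 : G), a * b) = ((0 : G) + 0, a * b * τ 0 0)
        rw [hn, mul_one, add_zero] }
  let ι : Additive A →+ Additive (G × A) := MonoidHom.toAdditive m
  let ιc : AddCommGrpCat.of (Additive A) ⟶ AddCommGrpCat.of (Additive (G × A)) := AddCommGrpCat.ofHom ι
  haveI : CategoryTheory.Mono ιc := by
    rw [AddCommGrpCat.mono_iff_injective]
    intro a b hab
    have : ((0 : G), a.toMul) = ((0 : G), b.toMul) := congrArg Additive.toMul hab
    exact congrArg (fun p : G × A => Additive.ofMul p.2) this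
  let r := CategoryTheory.Injective.factorThru (𝟙 (AddCommGrpCat.of (Additive A))) ιc
  let r' : Additive (G × A) →+ Additive A := r.hom
  have hr : ∀ a : A, r' (ι (Additive.ofMul a)) = Additive.ofMul a := by
    intro a
    have := CategoryTheory.Injective.comp_factorThru (𝟙 (AddCommGrpCat.of (Additive A))) ιc
    calc r' (ι (Additive.ofMul a)) = (ιc ≫ r) (Additive.ofMul a) := rfl
      _ = Additive.ofMul a := by rw [this]; rfl
  refine ⟨fun g => (r' (Additive.ofMul ((g, 1) : G × A))).toMul, fun u v => ?_⟩
  have key : ((u, 1) : G × A) * ((v, 1) : G × A)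
      = ((u + v, 1) : G × A) * (((0 : G), τ u v) : G × A) := by
    show ((u + v, 1 * 1 * τ u v) : G × A) = (u + v + 0, 1 * τ u v * τ (u + v) 0)
    rw [hn', one_mul, one_mul, mul_one, add_zero]
  have hmap : ∀ x y : G × A,
      r' (Additive.ofMul (x * y)) = r' (Additive.ofMul x) + r' (Additive.ofMul y) :=
    fun x y => map_add r' _ _
  calc (r' (Additive.ofMul ((u, 1) : G × A))).toMul * (r' (Additive.ofMul ((v, 1) : G × A))).toMul
      = (r' (Additive.ofMul (((u, 1) : G × A) * (v, 1)))).toMul := by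
        rw [hmap]; rfl
    _ = (r' (Additive.ofMul (((u + v, 1) : G × A) * ((0 : G), τ u v)))).toMul := by rw [key]
    _ = (r' (Additive.ofMul ((u + v, 1) : G × A))).toMul * (r' (ι (Additive.ofMul (τ u v)))).toMul := by
        rw [hmap]; rfl
    _ = _ := by rw [hr]; rfl

end Cocycle

section Phi

universe u1 u2

theorem exists_phi {F : Type u1} [Field F] [IsAlgClosed F] {ℓ : ℕ} {T : Type u2}
    [AddCommGroup T] (X : T → (Matrix (Fin ℓ) (Fin ℓ) F)ˣ)
    (hl : 0 < ℓ)
    (b : Module.Basis T F (Matrix (Fin ℓ) (Fin ℓ) F))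
    (hb : ∀ t : T, b t = (X t : Matrix (Fin ℓ) (Fin ℓ) F))
    (hone : X 0 = 1)
    (sigma : T → T → Fˣ)
    (hσ : ∀ u v : T, (X u : Matrix (Fin ℓ) (Fin ℓ) F) * (X v : Matrix (Fin ℓ) (Fin ℓ) F)
      = (sigma u v : F) • (X (u + v) : Matrix (Fin ℓ) (Fin ℓ) F))
    (β : T → T → Fˣ)
    (hcomm : ∀ u v : T, (X u : Matrix (Fin ℓ) (Fin ℓ) F) * (X v : Matrix (Fin ℓ) (Fin ℓ) F)
      = (β u v : F) • ((X v : Matrix (Fin ℓ) (Fin ℓ) F) * (X u : Matrix (Fin ℓ) (Fin ℓ) F)))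
    (π : AddAut T) (hπ : ∀ u v : T, β (π u) (π v) = β u v) :
    ∃ (φ : Matrix (Fin ℓ) (Fin ℓ) F ≃ₐ[F] Matrix (Fin ℓ) (Fin ℓ) F) (d : T → Fˣ),
      ∀ t : T, φ (X t : Matrix (Fin ℓ) (Fin ℓ) F) = (d t : F) • (X (π t) : Matrix (Fin ℓ) (Fin ℓ) F) := by
  classical
  -- the twisting cocycle
  set τ : T → T → Fˣ := fun u v => sigma (π u) (π v) * (sigma u v)⁻¹ with hτ
  have hAC : ∀ a b c e : Fˣ, a * b⁻¹ * (c * e⁻¹) = a * c * (b * e)⁻¹ := by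
    intro a b c e
    rw [mul_inv]
    simp only [mul_assoc, mul_comm, mul_left_comm]
  have hcoc : ∀ u v w : T, τ u v * τ (u + v) w = τ v w * τ u (v + w) := by
    intro u v w
    have h1 := sigma_cocycle X sigma hl hσ u v w
    have h2 := sigma_cocycle X sigma hl hσ (π u) (π v) (π w)
    rw [← map_add, ← map_add] at h2
    show sigma (π u) (π v) * (sigma u v)⁻¹ * (sigma (π (u+v)) (π w) * (sigma (u+v) w)⁻¹)
        = sigma (π v) (π w) * (sigma v w)⁻¹ * (sigma (π u) (π (v+w)) * (sigma u (v+w))⁻¹)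
    rw [hAC, hAC, h1, h2]
  have hsym : ∀ u v : T, τ u v = τ v u := by
    intro u v
    have h1 := beta_sigma X sigma hl hσ β hcomm u v
    have h2 := beta_sigma X sigma hl hσ β hcomm (π u) (π v)
    rw [hπ u v] at h2
    show sigma (π u) (π v) * (sigma u v)⁻¹ = sigma (π v) (π u) * (sigma v u)⁻¹
    rw [← h1, ← h2, mul_inv]
    calc β u v * sigma (π v) (π u) * ((β u v)⁻¹ * (sigma v u)⁻¹)
        = sigma (π v) (π u) * (sigma v u)⁻¹ * (β u v * (β u v)⁻¹) := by
          simp only [mul_assoc, mul_comm, mul_left_comm]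
      _ = sigma (π v) (π u) * (sigma v u)⁻¹ := by rw [mul_inv_cancel, mul_one]
  have hnorm : ∀ v : T, τ 0 v = 1 := by
    intro v
    show sigma (π 0) (π v) * (sigma 0 v)⁻¹ = 1
    rw [map_zero, sigma_zero_left X sigma hl hσ hone, sigma_zero_left X sigma hl hσ hone]
    simp
  -- divisibility of Fˣ
  have hdiv : ∀ (a : ULift.{u2} Fˣ) (n : ℕ), 0 < n → ∃ c : ULift.{u2} Fˣ, c ^ n = a := by
    intro a n hn
    obtain ⟨z, hz⟩ := IsAlgClosed.exists_pow_nat_eq (k := F) (a.down : F) hn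
    have hz0 : z ≠ 0 := by
      intro h
      rw [h, zero_pow (by omega)] at hz
      exact Units.ne_zero a.down hz.symm
    refine ⟨⟨Units.mk0 z hz0⟩, ?_⟩
    apply ULift.ext
    ext
    push_cast
    simpa using hz
  obtain ⟨c, hc⟩ := symm_cocycle_coboundary (G := ULift.{u1} T) (A := ULift.{u2} Fˣ) hdiv
    (fun u v => ⟨τ u.down v.down⟩)
    (fun u v w => ULift.ext _ _ (hcoc u.down v.down w.down))
    (fun u v => ULift.ext _ _ (hsym u.down v.down))
    (fun v => ULift.ext _ _ (hnorm v.down))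
  set d : T → Fˣ := fun t => ((c ⟨t⟩).down)⁻¹ with hd
  have hkey : ∀ u v : T, d u * d v * τ u v = d (u + v) := by
    intro u v
    have h2 : (c ⟨u⟩).down * (c ⟨v⟩).down = (c ⟨u + v⟩).down * τ u v :=
      congrArg ULift.down (hc ⟨u⟩ ⟨v⟩)
    show (c ⟨u⟩).down⁻¹ * (c ⟨v⟩).down⁻¹ * τ u v = (c ⟨u + v⟩).down⁻¹
    rw [← mul_inv, h2, mul_inv, mul_assoc, inv_mul_cancel, mul_one]
  have hd0 : d 0 = 1 := by
    have h := hkey 0 0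
    rw [hnorm 0, mul_one, add_zero] at h
    exact mul_left_cancel (h.trans (mul_one (d 0)).symm)
  have hu : ∀ u v : T, d u * d v * sigma (π u) (π v) = sigma u v * d (u + v) := by
    intro u v
    have h1 : d u * d v * sigma (π u) (π v) = (d u * d v * τ u v) * sigma u v := by
      show _ = (d u * d v * (sigma (π u) (π v) * (sigma u v)⁻¹)) * sigma u v
      rw [mul_assoc (d u * d v), mul_assoc (sigma (π u) (π v)), inv_mul_cancel, mul_one]
    rw [h1, hkey, mul_comm]
  have hsc : ∀ u v : T, (d u : F) * d v * sigma (π u) (π v) = sigma u v * d (u + v) := by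
    intro u v
    exact_mod_cast congrArg Units.val (hu u v)
  -- the linear equivalence
  classical
  let f : Matrix (Fin ℓ) (Fin ℓ) F →ₗ[F] Matrix (Fin ℓ) (Fin ℓ) F :=
    b.constr F (fun t => (d t : F) • b (π t))
  let g : Matrix (Fin ℓ) (Fin ℓ) F →ₗ[F] Matrix (Fin ℓ) (Fin ℓ) F :=
    b.constr F (fun t => ((d (π.symm t) : F)⁻¹) • b (π.symm t))
  have hfb : ∀ t, f (b t) = (d t : F) • b (π t) := fun t => b.constr_basis F _ t
  have hgb : ∀ t, g (b t) = ((d (π.symm t) : F)⁻¹) • b (π.symm t) := fun t =>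
    b.constr_basis F _ t
  have hfg : f.comp g = LinearMap.id := by
    refine b.ext fun t => ?_
    rw [LinearMap.comp_apply, hgb, _root_.map_smul, hfb, smul_smul, AddEquiv.apply_symm_apply,
      inv_mul_cancel₀ (Units.ne_zero _), one_smul, LinearMap.id_apply]
  have hgf : g.comp f = LinearMap.id := by
    refine b.ext fun t => ?_
    rw [LinearMap.comp_apply, hfb, _root_.map_smul, hgb, smul_smul, AddEquiv.symm_apply_apply,
      mul_inv_cancel₀ (Units.ne_zero _), one_smul, LinearMap.id_apply]
  let e : Matrix (Fin ℓ) (Fin ℓ) F ≃ₗ[F] Matrix (Fin ℓ) (Fin ℓ) F :=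
    LinearEquiv.ofLinear f g hfg hgf
  have heb : ∀ t, e (b t) = (d t : F) • b (π t) := fun t => hfb t
  have hb1 : b 0 = 1 := by rw [hb, hone, Units.val_one]
  have hmape : e 1 = 1 := by
    rw [← hb1, heb, _root_.map_zero, hb1]
    have : (d 0 : F) = 1 := by rw [hd0, Units.val_one]
    rw [this, one_smul]
  have hbilin : (LinearMap.mul F (Matrix (Fin ℓ) (Fin ℓ) F)).compr₂ (e : Matrix (Fin ℓ) (Fin ℓ) F →ₗ[F] Matrix (Fin ℓ) (Fin ℓ) F)
      = (LinearMap.mul F (Matrix (Fin ℓ) (Fin ℓ) F)).compl₁₂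
          (e : Matrix (Fin ℓ) (Fin ℓ) F →ₗ[F] Matrix (Fin ℓ) (Fin ℓ) F)
          (e : Matrix (Fin ℓ) (Fin ℓ) F →ₗ[F] Matrix (Fin ℓ) (Fin ℓ) F) := by
    refine b.ext fun s => ?_
    refine b.ext fun t => ?_
    simp only [LinearMap.compr₂_apply, LinearMap.compl₁₂_apply, LinearMap.mul_apply',
      LinearEquiv.coe_coe]
    calc e (b s * b t) = e ((sigma s t : F) • (X (s+t) : Matrix (Fin ℓ) (Fin ℓ) F)) := by
          rw [hb, hb, hσ]
      _ = (sigma s t : F) • ((d (s+t) : F) • b (π (s+t))) := by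
          rw [_root_.map_smul, ← hb, heb]
      _ = ((sigma s t : F) * (d (s+t) : F)) • b (π (s+t)) := by rw [smul_smul]
      _ = ((d s : F) * (d t : F) * (sigma (π s) (π t) : F)) • b (π s + π t) := by
          rw [← hsc, map_add]
      _ = ((d s : F) * (d t : F)) • ((sigma (π s) (π t) : F) • (X (π s + π t) : Matrix (Fin ℓ) (Fin ℓ) F)) := by
          rw [hb, smul_smul]
      _ = ((d s : F) * (d t : F)) • ((X (π s) : Matrix (Fin ℓ) (Fin ℓ) F) * (X (π t) : Matrix (Fin ℓ) (Fin ℓ) F)) := by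
          rw [hσ]
      _ = ((d s : F) • (X (π s) : Matrix (Fin ℓ) (Fin ℓ) F)) * ((d t : F) • (X (π t) : Matrix (Fin ℓ) (Fin ℓ) F)) := by
          rw [Algebra.smul_mul_assoc, Algebra.mul_smul_comm, smul_smul]
      _ = e (b s) * e (b t) := by rw [heb, heb, hb, hb]
  have hmul : ∀ x y : Matrix (Fin ℓ) (Fin ℓ) F, e (x * y) = e x * e y := by
    intro x y
    have := LinearMap.congr_fun (LinearMap.congr_fun hbilin x) y
    simpa only [LinearMap.compr₂_apply, LinearMap.compl₁₂_apply, LinearMap.mul_apply',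
      LinearEquiv.coe_coe] using this
  refine ⟨AlgEquiv.ofLinearEquiv e hmape hmul, d, fun t => ?_⟩
  show e (X t : Matrix (Fin ℓ) (Fin ℓ) F) = (d t : F) • (X (π t) : Matrix (Fin ℓ) (Fin ℓ) F)
  rw [← hb, heb, hb]

end Phi

section Conj

variable {R A : Type*} [CommSemiring R] [Ring A] [Algebra R A]

/-- Conjugation by a unit, as an algebra automorphism. -/
def conjAe (u : Aˣ) : A ≃ₐ[R] A where
  toFun a := (u : A) * a * ((u⁻¹ : Aˣ) : A)
  invFun a := ((u⁻¹ : Aˣ) : A) * a * (u : A)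
  left_inv a := by
    simp [mul_assoc]
  right_inv a := by
    simp [mul_assoc]
  map_add' a b := by
    simp [mul_add, add_mul]
  map_mul' a b := by
    simp only [mul_assoc]
    rw [Units.inv_mul_cancel_left]
  commutes' r := by
    simp only [mul_assoc, Algebra.commutes r (((u⁻¹ : Aˣ) : A))]
    rw [Units.mul_inv_cancel_left]

theorem conjAe_apply (u : Aˣ) (a : A) : conjAe (R := R) u a = (u : A) * a * ((u⁻¹ : Aˣ) : A) := rfl

end Conj

section MapSpan

variable {M N : Type*} [AddCommGroup M] [AddCommGroup N] [Module F M] [Module F N]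

theorem map_span_scaled (e : M →ₗ[F] N) (S : Set M) (S' : Set N)
    (h1 : ∀ m ∈ S, ∃ (c : Fˣ) (m' : N), m' ∈ S' ∧ e m = (c : F) • m')
    (h2 : ∀ m' ∈ S', ∃ (c : Fˣ) (m : M), m ∈ S ∧ e m = (c : F) • m') :
    Submodule.map e (Submodule.span F S) = Submodule.span F S' := by
  rw [Submodule.map_span]
  apply le_antisymm
  · rw [Submodule.span_le]
    rintro _ ⟨m, hm, rfl⟩
    obtain ⟨c, m', hm', he⟩ := h1 m hm
    rw [he]
    exact Submodule.smul_mem _ _ (Submodule.subset_span hm')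
  · rw [Submodule.span_le]
    intro m' hm'
    obtain ⟨c, m, hm, he⟩ := h2 m' hm'
    have : m' = ((c⁻¹ : Fˣ) : F) • e m := by
      rw [he, smul_smul]
      simp
    rw [this]
    exact Submodule.smul_mem _ _ (Submodule.subset_span ⟨m, hm, rfl⟩)

end MapSpan

section Auts

/-- permutation action on `sumZero k` -/
def permAut (σ : Equiv.Perm (Fin k)) : AddAut ↥(sumZero k) where
  toFun x := ⟨fun i => (x : Fin k → ℤ) (σ.symm i), by
    rw [mem_sumZero]
    rw [show ∑ i, (x : Fin k → ℤ) (σ.symm i) = ∑ i, (x : Fin k → ℤ) i from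
      Equiv.sum_comp σ.symm _]
    exact x.2⟩
  invFun x := ⟨fun i => (x : Fin k → ℤ) (σ i), by
    rw [mem_sumZero]
    rw [show ∑ i, (x : Fin k → ℤ) (σ i) = ∑ i, (x : Fin k → ℤ) i from
      Equiv.sum_comp σ _]
    exact x.2⟩
  left_inv x := by
    ext i
    simp
  right_inv x := by
    ext i
    simp
  map_add' x y := rfl

theorem permAut_apply_val (σ : Equiv.Perm (Fin k)) (x : ↥(sumZero k)) (i : Fin k) :
    ((permAut σ x : ↥(sumZero k)) : Fin k → ℤ) i = (x : Fin k → ℤ) (σ.symm i) := rfl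

theorem single_comp_perm (σ : Equiv.Perm (Fin k)) (i : Fin k) :
    (fun m => (Pi.single i 1 : Fin k → ℤ) (σ.symm m)) = Pi.single (σ i) 1 := by
  funext m
  simp only [Pi.single_apply]
  by_cases h : σ.symm m = i
  · rw [if_pos h, if_pos (by rw [← h, Equiv.apply_symm_apply])]
  · rw [if_neg h, if_neg (fun hc => h (by rw [hc, Equiv.symm_apply_apply]))]

theorem permAut_δ (σ : Equiv.Perm (Fin k)) (i j : Fin k) :
    permAut σ (δ i j) = δ (σ i) (σ j) := by
  ext m
  have h1 := congrFun (single_comp_perm σ i) m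
  have h2 := congrFun (single_comp_perm σ j) m
  show (Pi.single i 1 - Pi.single j 1 : Fin k → ℤ) (σ.symm m)
      = (Pi.single (σ i) 1 - Pi.single (σ j) 1 : Fin k → ℤ) m
  simp only [Pi.sub_apply]
  rw [← h1, ← h2]

/-- the even part of the Weyl group: `κ(π, σ)` -/
def kappa {T : Type*} [AddCommGroup T] (π : AddAut T) (σ : Equiv.Perm (Fin k)) :
    AddAut (↥(sumZero k) × T) :=
  AddEquiv.prodCongr (permAut σ) π

theorem kappa_apply {T : Type*} [AddCommGroup T] (π : AddAut T) (σ : Equiv.Perm (Fin k))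
    (g : ↥(sumZero k) × T) : kappa π σ g = (permAut σ g.1, π g.2) := rfl

/-- sum `∑ xᵢ • sᵢ` -/
def wsum {T : Type*} [AddCommGroup T] (s : Fin k → T) (x : ↥(sumZero k)) : T :=
  ∑ i, (x : Fin k → ℤ) i • s i

theorem wsum_add {T : Type*} [AddCommGroup T] (s : Fin k → T) (x y : ↥(sumZero k)) :
    wsum s (x + y) = wsum s x + wsum s y := by
  unfold wsum
  rw [← Finset.sum_add_distrib]
  refine Finset.sum_congr rfl fun i _ => ?_
  show ((x : Fin k → ℤ) i + (y : Fin k → ℤ) i) • s i = _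
  rw [add_smul]

theorem wsum_single_sub {T : Type*} [AddCommGroup T] (s : Fin k → T) (x : ↥(sumZero k))
    {i j : Fin k} (hx : (x : Fin k → ℤ) = Pi.single i 1 - Pi.single j 1) :
    wsum s x = s i - s j := by
  unfold wsum
  rw [hx]
  simp only [Pi.sub_apply, sub_smul]
  rw [Finset.sum_sub_distrib]
  congr 1
  · rw [Finset.sum_eq_single i]
    · simp
    · intro m _ hm
      simp [Pi.single_apply, hm]
    · simp
  · rw [Finset.sum_eq_single j]
    · simp
    · intro m _ hm
      simp [Pi.single_apply, hm]
    · simp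

/-- the toral part of the Weyl group: `ν(s)` -/
def nu {T : Type*} [AddCommGroup T] (s : Fin k → T) : AddAut (↥(sumZero k) × T) where
  toFun g := (g.1, g.2 + wsum s g.1)
  invFun g := (g.1, g.2 - wsum s g.1)
  left_inv g := by
    refine Prod.ext rfl ?_
    show g.2 + wsum s g.1 - wsum s g.1 = g.2
    abel
  right_inv g := by
    refine Prod.ext rfl ?_
    show g.2 - wsum s g.1 + wsum s g.1 = g.2
    abel
  map_add' g h := by
    refine Prod.ext rfl ?_
    show g.2 + h.2 + wsum s (g.1 + h.1) = g.2 + wsum s g.1 + (h.2 + wsum s h.1)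
    rw [wsum_add]
    abel

theorem nu_apply {T : Type*} [AddCommGroup T] (s : Fin k → T) (g : ↥(sumZero k) × T) :
    nu s g = (g.1, g.2 + wsum s g.1) := rfl

end Auts

section WGroup

/-- The Weyl group of the grading, as a subgroup of `AddAut (sumZero k × T)`. -/
def Wgroup : Subgroup (AddAut (↥(sumZero k) × T)) where
  carrier := {μ | ∃ ψ : Matrix (Fin k) (Fin k) (Matrix (Fin ℓ) (Fin ℓ) F)
      ≃ₐ[F] Matrix (Fin k) (Fin k) (Matrix (Fin ℓ) (Fin ℓ) F),
    ∀ g, Submodule.map ψ.toLinearMap (matrixFineGrading X g) = matrixFineGrading X (μ g)}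
  one_mem' := by
    refine ⟨AlgEquiv.refl, fun g => ?_⟩
    have h1 : (AlgEquiv.refl (R := F)
        (A₁ := Matrix (Fin k) (Fin k) (Matrix (Fin ℓ) (Fin ℓ) F))).toLinearMap
        = LinearMap.id := by
      ext x
      rfl
    rw [h1, Submodule.map_id]
    rfl
  mul_mem' := by
    rintro μa μb ⟨ψa, ha⟩ ⟨ψb, hb⟩
    refine ⟨ψb.trans ψa, fun g => ?_⟩
    have h1 : (ψb.trans ψa).toLinearMap = ψa.toLinearMap.comp ψb.toLinearMap := by
      ext x
      rfl
    rw [h1, Submodule.map_comp, hb, ha]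
    rfl
  inv_mem' := by
    rintro μ ⟨ψ, hψ⟩
    refine ⟨ψ.symm, fun g => ?_⟩
    have hcancel : ∀ p : Submodule F (Matrix (Fin k) (Fin k) (Matrix (Fin ℓ) (Fin ℓ) F)),
        Submodule.map ψ.symm.toLinearMap (Submodule.map ψ.toLinearMap p) = p := by
      intro p
      rw [← Submodule.map_comp]
      have : ψ.symm.toLinearMap.comp ψ.toLinearMap = LinearMap.id := by
        ext x
        simp
      rw [this, Submodule.map_id]
    have h2 := hψ (μ⁻¹ g)
    have h3 : μ (μ⁻¹ g) = g := by
      show μ (μ.symm g) = g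
      exact μ.apply_symm_apply g
    rw [h3] at h2
    rw [← h2, hcancel]

theorem mem_Wgroup (μ : AddAut (↥(sumZero k) × T)) : μ ∈ Wgroup X ↔
    ∃ ψ : Matrix (Fin k) (Fin k) (Matrix (Fin ℓ) (Fin ℓ) F)
      ≃ₐ[F] Matrix (Fin k) (Fin k) (Matrix (Fin ℓ) (Fin ℓ) F),
    ∀ g, Submodule.map ψ.toLinearMap (matrixFineGrading X g) = matrixFineGrading X (μ g) :=
  Iff.rfl

end WGroup

section Realize

theorem permAut_one : permAut (1 : Equiv.Perm (Fin k)) = 1 := by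
  ext x
  rfl

/-- the diagonal matrix `diag(X_{s 1}, ..., X_{s k})` as a unit -/
def diagUnit (s : Fin k → T) : (Matrix (Fin k) (Fin k) (Matrix (Fin ℓ) (Fin ℓ) F))ˣ where
  val := diagonal (fun i => (X (s i) : Matrix (Fin ℓ) (Fin ℓ) F))
  inv := diagonal (fun i => (((X (s i))⁻¹ : (Matrix (Fin ℓ) (Fin ℓ) F)ˣ) : Matrix (Fin ℓ) (Fin ℓ) F))
  val_inv := by
    rw [diagonal_mul_diagonal]
    have h : ∀ i, (X (s i) : Matrix (Fin ℓ) (Fin ℓ) F)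
        * (((X (s i))⁻¹ : (Matrix (Fin ℓ) (Fin ℓ) F)ˣ) : Matrix (Fin ℓ) (Fin ℓ) F) = 1 :=
      fun i => Units.mul_inv _
    simp only [h]
    exact diagonal_one
  inv_val := by
    rw [diagonal_mul_diagonal]
    have h : ∀ i, (((X (s i))⁻¹ : (Matrix (Fin ℓ) (Fin ℓ) F)ˣ) : Matrix (Fin ℓ) (Fin ℓ) F)
        * (X (s i) : Matrix (Fin ℓ) (Fin ℓ) F) = 1 :=
      fun i => Units.inv_mul _
    simp only [h]
    exact diagonal_one

theorem diag_conj_E (s : Fin k → T) (i j : Fin k) (t : T) :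
    conjAe (R := F) (diagUnit X s) (E X i j t)
      = single i j ((X (s i) : Matrix (Fin ℓ) (Fin ℓ) F) * (X t : Matrix (Fin ℓ) (Fin ℓ) F)
          * (((X (s j))⁻¹ : (Matrix (Fin ℓ) (Fin ℓ) F)ˣ) : Matrix (Fin ℓ) (Fin ℓ) F)) := by
  rw [conjAe_apply]
  show diagonal _ * E X i j t * diagonal _ = _
  ext p q
  rw [mul_diagonal, diagonal_mul]
  simp only [E, single, Matrix.of_apply]
  split_ifs with h
  · obtain ⟨rfl, rfl⟩ := h
    rfl
  · rw [mul_zero, zero_mul]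

theorem conj_scalar (hl : 0 < ℓ) (hone : X 0 = 1) (sigma : T → T → Fˣ)
    (hσ : ∀ u v : T, (X u : Matrix (Fin ℓ) (Fin ℓ) F) * (X v : Matrix (Fin ℓ) (Fin ℓ) F)
      = (sigma u v : F) • (X (u + v) : Matrix (Fin ℓ) (Fin ℓ) F))
    (a t e : T) :
    ∃ cu : Fˣ, (X a : Matrix (Fin ℓ) (Fin ℓ) F) * (X t : Matrix (Fin ℓ) (Fin ℓ) F)
        * (((X e)⁻¹ : (Matrix (Fin ℓ) (Fin ℓ) F)ˣ) : Matrix (Fin ℓ) (Fin ℓ) F)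
      = (cu : F) • (X (t + (a - e)) : Matrix (Fin ℓ) (Fin ℓ) F) := by
  refine ⟨sigma a t * (sigma e (-e))⁻¹ * sigma (a + t) (-e), ?_⟩
  rw [hσ a t, Xinv_val X sigma hone hσ e]
  rw [Algebra.smul_mul_assoc, Algebra.mul_smul_comm, hσ, smul_smul, smul_smul]
  have hT : a + t + -e = t + (a - e) := by abel
  rw [hT]
  congr 1
  push_cast
  ring

theorem nu_mem_aux (hl : 0 < ℓ) (hone : X 0 = 1) (sigma : T → T → Fˣ)
    (hσ : ∀ u v : T, (X u : Matrix (Fin ℓ) (Fin ℓ) F) * (X v : Matrix (Fin ℓ) (Fin ℓ) F)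
      = (sigma u v : F) • (X (u + v) : Matrix (Fin ℓ) (Fin ℓ) F))
    (s : Fin k → T) (g : ↥(sumZero k) × T) :
    Submodule.map (conjAe (R := F) (diagUnit X s)).toLinearMap (matrixFineGrading X g)
      = matrixFineGrading X (nu s g) := by
  have key : ∀ i j : Fin k, (g.1 : Fin k → ℤ) = Pi.single i 1 - Pi.single j 1 →
      ∃ cu : Fˣ, conjAe (R := F) (diagUnit X s) (E X i j g.2)
        = (cu : F) • E X i j ((nu s g).2) := by
    intro i j hx
    obtain ⟨cu, hcu⟩ := conj_scalar X hl hone sigma hσ (s i) g.2 (s j)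
    refine ⟨cu, ?_⟩
    rw [diag_conj_E, hcu]
    have h2 : (nu s g).2 = g.2 + (s i - s j) := by
      rw [nu_apply, wsum_single_sub s g.1 hx]
    rw [h2, E, ← smul_single]
  rw [grading_eq, grading_eq]
  apply map_span_scaled
  · rintro m ⟨i, j, hx, rfl⟩
    obtain ⟨cu, hcu⟩ := key i j hx
    exact ⟨cu, E X i j ((nu s g).2), ⟨i, j, hx, rfl⟩, hcu⟩
  · rintro m' ⟨i, j, hx, rfl⟩
    obtain ⟨cu, hcu⟩ := key i j hx
    exact ⟨cu, E X i j g.2, ⟨i, j, hx, rfl⟩, hcu⟩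

theorem nu_mem (hl : 0 < ℓ) (hone : X 0 = 1) (sigma : T → T → Fˣ)
    (hσ : ∀ u v : T, (X u : Matrix (Fin ℓ) (Fin ℓ) F) * (X v : Matrix (Fin ℓ) (Fin ℓ) F)
      = (sigma u v : F) • (X (u + v) : Matrix (Fin ℓ) (Fin ℓ) F))
    (s : Fin k → T) : nu s ∈ Wgroup (k := k) X :=
  ⟨conjAe (R := F) (diagUnit X s), nu_mem_aux X hl hone sigma hσ s⟩

theorem reindex_stdBasis (σ : Equiv.Perm (Fin k)) (i j : Fin k) (v : Matrix (Fin ℓ) (Fin ℓ) F) :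
    reindexAlgEquiv F (Matrix (Fin ℓ) (Fin ℓ) F) σ (single i j v)
      = single (σ i) (σ j) v := by
  ext p q
  rw [reindexAlgEquiv_apply, reindex_apply, submatrix_apply]
  simp only [single, Matrix.of_apply]
  simp only [Equiv.eq_symm_apply]

theorem permAut_val_single (σ : Equiv.Perm (Fin k)) (x : ↥(sumZero k)) {i j : Fin k}
    (hx : (x : Fin k → ℤ) = Pi.single i 1 - Pi.single j 1) :
    ((permAut σ x : ↥(sumZero k)) : Fin k → ℤ) = Pi.single (σ i) 1 - Pi.single (σ j) 1 := by
  have h : x = δ i j := Subtype.ext hx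
  rw [h, permAut_δ]
  rfl

theorem perm_mem_aux (σ : Equiv.Perm (Fin k)) (g : ↥(sumZero k) × T) :
    Submodule.map (reindexAlgEquiv F (Matrix (Fin ℓ) (Fin ℓ) F) σ).toLinearMap
        (matrixFineGrading X g)
      = matrixFineGrading X (kappa (1 : AddAut T) σ g) := by
  rw [grading_eq, grading_eq]
  apply map_span_scaled
  · rintro m ⟨i, j, hx, rfl⟩
    refine ⟨1, E X (σ i) (σ j) g.2, ⟨σ i, σ j, permAut_val_single σ g.1 hx, rfl⟩, ?_⟩
    rw [AlgEquiv.toLinearMap_apply, E, reindex_stdBasis, Units.val_one, one_smul]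
    rfl
  · rintro m' ⟨i, j, hx, rfl⟩
    have hx2 : (g.1 : Fin k → ℤ) = Pi.single (σ.symm i) 1 - Pi.single (σ.symm j) 1 := by
      have h3 : ((permAut σ g.1 : ↥(sumZero k)) : Fin k → ℤ)
          = Pi.single i 1 - Pi.single j 1 := hx
      have h4 : (g.1 : Fin k → ℤ) = fun m => ((permAut σ g.1 : ↥(sumZero k)) : Fin k → ℤ) (σ m) := by
        funext m
        rw [permAut_apply_val, Equiv.symm_apply_apply]
      rw [h4]
      funext m
      rw [h3]
      have h5 := congrFun (single_comp_perm σ.symm i) m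
      have h6 := congrFun (single_comp_perm σ.symm j) m
      simp only [Equiv.symm_symm] at h5 h6
      show (Pi.single i 1 : Fin k → ℤ) (σ m) - (Pi.single j 1 : Fin k → ℤ) (σ m) = _
      rw [h5, h6]
      rfl
    refine ⟨1, E X (σ.symm i) (σ.symm j) g.2, ⟨σ.symm i, σ.symm j, hx2, rfl⟩, ?_⟩
    rw [AlgEquiv.toLinearMap_apply, E, reindex_stdBasis, Units.val_one, one_smul,
      Equiv.apply_symm_apply, Equiv.apply_symm_apply]
    rfl

theorem perm_mem (σ : Equiv.Perm (Fin k)) :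
    kappa (1 : AddAut T) σ ∈ Wgroup (ℓ := ℓ) (F := F) X :=
  ⟨reindexAlgEquiv F (Matrix (Fin ℓ) (Fin ℓ) F) σ, perm_mem_aux X σ⟩

theorem mapMatrix_stdBasis (φ : Matrix (Fin ℓ) (Fin ℓ) F ≃ₐ[F] Matrix (Fin ℓ) (Fin ℓ) F)
    (i j : Fin k) (v : Matrix (Fin ℓ) (Fin ℓ) F) :
    AlgEquiv.mapMatrix φ (single i j v) = single i j (φ v) := by
  ext p q
  rw [AlgEquiv.mapMatrix_apply, Matrix.map_apply]
  simp only [single, Matrix.of_apply]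
  split_ifs
  · rfl
  · exact congrFun (congrFun (map_zero φ) _) _

theorem phi_mem_aux (π : AddAut T)
    (φ : Matrix (Fin ℓ) (Fin ℓ) F ≃ₐ[F] Matrix (Fin ℓ) (Fin ℓ) F) (dφ : T → Fˣ)
    (hφ : ∀ t : T, φ (X t : Matrix (Fin ℓ) (Fin ℓ) F)
      = (dφ t : F) • (X (π t) : Matrix (Fin ℓ) (Fin ℓ) F))
    (g : ↥(sumZero k) × T) :
    Submodule.map (AlgEquiv.mapMatrix (m := Fin k) φ).toLinearMap (matrixFineGrading X g)
      = matrixFineGrading X (kappa π (1 : Equiv.Perm (Fin k)) g) := by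
  have hfst : ((kappa π (1 : Equiv.Perm (Fin k)) g).1 : Fin k → ℤ) = (g.1 : Fin k → ℤ) := rfl
  have hsnd : (kappa π (1 : Equiv.Perm (Fin k)) g).2 = π g.2 := rfl
  rw [grading_eq, grading_eq]
  apply map_span_scaled
  · rintro m ⟨i, j, hx, rfl⟩
    refine ⟨dφ g.2, E X i j (π g.2), ⟨i, j, by rw [hfst]; exact hx, by rw [hsnd]⟩, ?_⟩
    rw [AlgEquiv.toLinearMap_apply, E, mapMatrix_stdBasis, hφ, ← smul_single]
    rfl
  · rintro m' ⟨i, j, hx, rfl⟩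
    refine ⟨dφ g.2, E X i j g.2, ⟨i, j, by rw [← hfst]; exact hx, rfl⟩, ?_⟩
    rw [AlgEquiv.toLinearMap_apply, E, mapMatrix_stdBasis, hφ, ← smul_single]
    rw [hsnd]
    rfl

theorem phi_mem (π : AddAut T)
    (φ : Matrix (Fin ℓ) (Fin ℓ) F ≃ₐ[F] Matrix (Fin ℓ) (Fin ℓ) F) (dφ : T → Fˣ)
    (hφ : ∀ t : T, φ (X t : Matrix (Fin ℓ) (Fin ℓ) F)
      = (dφ t : F) • (X (π t) : Matrix (Fin ℓ) (Fin ℓ) F)) :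
    kappa π (1 : Equiv.Perm (Fin k)) ∈ Wgroup (k := k) X :=
  ⟨AlgEquiv.mapMatrix φ, phi_mem_aux X π φ dφ hφ⟩

theorem kappa_mul (π₁ π₂ : AddAut T) (σ₁ σ₂ : Equiv.Perm (Fin k)) :
    kappa (π₁ * π₂) (σ₁ * σ₂) = kappa π₁ σ₁ * kappa π₂ σ₂ := by
  ext g <;> rfl

theorem kappa_decomp (π : AddAut T) (σ : Equiv.Perm (Fin k)) :
    kappa π σ = kappa π 1 * kappa 1 σ := by
  rw [← kappa_mul, mul_one, one_mul]

theorem kappa_mem (hl : 0 < ℓ)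
    (π : AddAut T) (σ : Equiv.Perm (Fin k))
    (φ : Matrix (Fin ℓ) (Fin ℓ) F ≃ₐ[F] Matrix (Fin ℓ) (Fin ℓ) F) (dφ : T → Fˣ)
    (hφ : ∀ t : T, φ (X t : Matrix (Fin ℓ) (Fin ℓ) F)
      = (dφ t : F) • (X (π t) : Matrix (Fin ℓ) (Fin ℓ) F)) :
    kappa π σ ∈ Wgroup (k := k) X := by
  rw [kappa_decomp]
  exact mul_mem (phi_mem X π φ dφ hφ) (perm_mem X σ)

end Realize

section Converse

theorem nontrivialA (hl : 0 < ℓ) (hk : 0 < k) :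
    Nontrivial (Matrix (Fin k) (Fin k) (Matrix (Fin ℓ) (Fin ℓ) F)) := by
  haveI := nontrivialD (F := F) hl
  haveI : Nonempty (Fin k) := Fin.pos_iff_nonempty.mp hk
  infer_instance

theorem map_ne_bot (ψ : Matrix (Fin k) (Fin k) (Matrix (Fin ℓ) (Fin ℓ) F)
      ≃ₐ[F] Matrix (Fin k) (Fin k) (Matrix (Fin ℓ) (Fin ℓ) F))
    {p : Submodule F (Matrix (Fin k) (Fin k) (Matrix (Fin ℓ) (Fin ℓ) F))} (hp : p ≠ ⊥) :
    Submodule.map ψ.toLinearMap p ≠ ⊥ := by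
  obtain ⟨x, hx, hx0⟩ := Submodule.exists_mem_ne_zero_of_ne_bot hp
  rw [Submodule.ne_bot_iff]
  refine ⟨ψ x, ⟨x, hx, rfl⟩, ?_⟩
  intro h
  exact hx0 (by simpa using congrArg ψ.symm h)

theorem supp_iff (hl : 0 < ℓ) (g : ↥(sumZero k) × T) :
    matrixFineGrading X g ≠ ⊥ ↔
      ∃ i j : Fin k, (g.1 : Fin k → ℤ) = Pi.single i 1 - Pi.single j 1 := by
  constructor
  · intro h
    by_contra hc
    push_neg at hc
    exact h (grading_bot X hc)
  · rintro ⟨i, j, hx⟩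
    rw [Submodule.ne_bot_iff]
    refine ⟨E X i j g.2, ?_, E_ne_zero X hl i j g.2⟩
    rw [grading_eq]
    exact Submodule.subset_span ⟨i, j, hx, rfl⟩

theorem diagonal_eq_sum_E (t : T) :
    (diagonal fun _ : Fin k => (X t : Matrix (Fin ℓ) (Fin ℓ) F)) = ∑ i, E X i i t := by
  ext p q
  rw [Matrix.sum_apply]
  by_cases hpq : p = q
  · subst hpq
    rw [diagonal_apply_eq, Finset.sum_eq_single p]
    · simp [E]
    · intro j _ hj
      simp [E, single, Matrix.of_apply, hj]
    · simp
  · rw [diagonal_apply_ne _ hpq]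
    have hz : ∀ i ∈ (Finset.univ : Finset (Fin k)),
        E X i i t p q = (0 : Matrix (Fin ℓ) (Fin ℓ) F) := by
      intro i _
      simp only [E, single, Matrix.of_apply]
      rw [if_neg]
      rintro ⟨rfl, rfl⟩
      exact hpq rfl
    rw [Finset.sum_eq_zero hz]

theorem diag_mem_grading (t : T) :
    (diagonal fun _ : Fin k => (X t : Matrix (Fin ℓ) (Fin ℓ) F)) ∈
      matrixFineGrading X ((0 : ↥(sumZero k)), t) := by
  rw [grading_zero, diagonal_eq_sum_E]
  exact Submodule.sum_mem _ fun i _ => Submodule.subset_span ⟨i, rfl⟩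

theorem not_unit_of_mem_root (hl : 0 < ℓ) (hk : 0 < k) {a b : Fin k} (hab : a ≠ b) {t : T}
    {m : Matrix (Fin k) (Fin k) (Matrix (Fin ℓ) (Fin ℓ) F)}
    (hm : m ∈ matrixFineGrading X (δ a b, t)) : ¬ IsUnit m := by
  haveI := nontrivialA (F := F) hl hk
  rw [grading_root X hab, Submodule.mem_span_singleton] at hm
  obtain ⟨c, rfl⟩ := hm
  intro hu
  have hsq : (c • E X a b t) * (c • E X a b t) = 0 := by
    rw [Algebra.smul_mul_assoc, Algebra.mul_smul_comm, E_mul_ne X (Ne.symm hab)]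
    simp
  have := (hu.mul hu)
  rw [hsq] at this
  have h0 : (0 : Matrix (Fin k) (Fin k) (Matrix (Fin ℓ) (Fin ℓ) F)) = 1 := isUnit_zero_iff.mp this
  exact one_ne_zero h0.symm

theorem first_comp_zero (hl : 0 < ℓ) (hk : 0 < k) (μ : AddAut (↥(sumZero k) × T))
    (ψ : Matrix (Fin k) (Fin k) (Matrix (Fin ℓ) (Fin ℓ) F)
      ≃ₐ[F] Matrix (Fin k) (Fin k) (Matrix (Fin ℓ) (Fin ℓ) F))
    (hψ : ∀ g, Submodule.map ψ.toLinearMap (matrixFineGrading X g) = matrixFineGrading X (μ g))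
    (t : T) : (μ ((0 : ↥(sumZero k)), t)).1 = 0 := by
  have i0 : Fin k := ⟨0, hk⟩
  have hne : matrixFineGrading X ((0 : ↥(sumZero k)), t) ≠ ⊥ := by
    rw [supp_iff X hl]
    exact ⟨i0, i0, by simp⟩
  have h2 : matrixFineGrading X (μ ((0 : ↥(sumZero k)), t)) ≠ ⊥ :=
    hψ ((0 : ↥(sumZero k)), t) ▸ map_ne_bot ψ hne
  obtain ⟨a, b, hab'⟩ := (supp_iff X hl _).1 h2
  by_cases hab : a = b
  · subst hab
    rw [sub_self] at hab'
    exact Subtype.ext hab'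
  · exfalso
    have hup : μ ((0 : ↥(sumZero k)), t) = (δ a b, (μ ((0 : ↥(sumZero k)), t)).2) :=
      Prod.ext (Subtype.ext hab') rfl
    have hmem : ψ (diagonal fun _ : Fin k => (X t : Matrix (Fin ℓ) (Fin ℓ) F))
        ∈ matrixFineGrading X (μ ((0 : ↥(sumZero k)), t)) :=
      hψ ((0 : ↥(sumZero k)), t) ▸ Submodule.mem_map_of_mem (diag_mem_grading X t)
    rw [hup] at hmem
    have hu : IsUnit (ψ (diagonal fun _ : Fin k => (X t : Matrix (Fin ℓ) (Fin ℓ) F))) :=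
      (Units.isUnit (diagUnit X fun _ => t)).map ψ
    exact not_unit_of_mem_root X hl hk hab hmem hu

theorem root_image (hl : 0 < ℓ) (hk : 0 < k) (μ : AddAut (↥(sumZero k) × T))
    (ψ : Matrix (Fin k) (Fin k) (Matrix (Fin ℓ) (Fin ℓ) F)
      ≃ₐ[F] Matrix (Fin k) (Fin k) (Matrix (Fin ℓ) (Fin ℓ) F))
    (hψ : ∀ g, Submodule.map ψ.toLinearMap (matrixFineGrading X g) = matrixFineGrading X (μ g))
    (hinv : ∀ x : T, (μ⁻¹ ((0 : ↥(sumZero k)), x)).1 = 0)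
    (i j : Fin k) (hij : i ≠ j) (t : T) :
    ∃ a b : Fin k, a ≠ b ∧ (μ (δ i j, t)).1 = δ a b ∧
      ∃ cu : Fˣ, ψ (E X i j t) = (cu : F) • E X a b ((μ (δ i j, t)).2) := by
  have hne : matrixFineGrading X (δ i j, t) ≠ ⊥ := by
    rw [supp_iff X hl]
    exact ⟨i, j, rfl⟩
  have h2 : matrixFineGrading X (μ (δ i j, t)) ≠ ⊥ := hψ (δ i j, t) ▸ map_ne_bot ψ hne
  obtain ⟨a, b, hab'⟩ := (supp_iff X hl _).1 h2
  have hup : μ (δ i j, t) = (δ a b, (μ (δ i j, t)).2) := Prod.ext (Subtype.ext hab') rfl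
  have hab : a ≠ b := by
    rintro rfl
    rw [δ_same] at hup
    have h4 := hinv ((μ (δ i j, t)).2)
    rw [← hup] at h4
    have h3 : μ⁻¹ (μ (δ i j, t)) = (δ i j, t) := μ.symm_apply_apply _
    rw [h3] at h4
    exact hij (δ_eq_zero_iff.1 h4)
  have hmem : ψ (E X i j t) ∈ matrixFineGrading X (μ (δ i j, t)) := by
    refine hψ (δ i j, t) ▸ Submodule.mem_map_of_mem ?_
    rw [grading_eq]
    exact Submodule.subset_span ⟨i, j, rfl, rfl⟩
  rw [hup, grading_root X hab, Submodule.mem_span_singleton] at hmem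
  obtain ⟨c, hc⟩ := hmem
  have hc0 : c ≠ 0 := by
    rintro rfl
    rw [zero_smul] at hc
    refine E_ne_zero X hl i j t (ψ.injective ?_)
    rw [map_zero]
    exact hc.symm
  exact ⟨a, b, hab, congrArg Prod.fst hup, Units.mk0 c hc0, hc.symm⟩

theorem beta_preserved (hl : 0 < ℓ) (hk : 0 < k)
    (sigma : T → T → Fˣ)
    (hσ : ∀ u v : T, (X u : Matrix (Fin ℓ) (Fin ℓ) F) * (X v : Matrix (Fin ℓ) (Fin ℓ) F)
      = (sigma u v : F) • (X (u + v) : Matrix (Fin ℓ) (Fin ℓ) F))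
    (β : T → T → Fˣ)
    (hcomm : ∀ u v : T, (X u : Matrix (Fin ℓ) (Fin ℓ) F) * (X v : Matrix (Fin ℓ) (Fin ℓ) F)
      = (β u v : F) • ((X v : Matrix (Fin ℓ) (Fin ℓ) F) * (X u : Matrix (Fin ℓ) (Fin ℓ) F)))
    (μ : AddAut (↥(sumZero k) × T))
    (ψ : Matrix (Fin k) (Fin k) (Matrix (Fin ℓ) (Fin ℓ) F)
      ≃ₐ[F] Matrix (Fin k) (Fin k) (Matrix (Fin ℓ) (Fin ℓ) F))
    (hψ : ∀ g, Submodule.map ψ.toLinearMap (matrixFineGrading X g) = matrixFineGrading X (μ g))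
    (πf : T → T) (hπf : ∀ t : T, μ ((0 : ↥(sumZero k)), t) = ((0 : ↥(sumZero k)), πf t))
    (u v : T) : β (πf u) (πf v) = β u v := by
  haveI := nontrivialA (F := F) hl hk
  set Du := diagonal (fun _ : Fin k => (X u : Matrix (Fin ℓ) (Fin ℓ) F)) with hDudef
  set Dv := diagonal (fun _ : Fin k => (X v : Matrix (Fin ℓ) (Fin ℓ) F)) with hDvdef
  have hmemu : ψ Du ∈ matrixFineGrading X ((0 : ↥(sumZero k)), πf u) := by
    rw [← hπf u, ← hψ]
    exact Submodule.mem_map_of_mem (diag_mem_grading X u)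
  have hmemv : ψ Dv ∈ matrixFineGrading X ((0 : ↥(sumZero k)), πf v) := by
    rw [← hπf v, ← hψ]
    exact Submodule.mem_map_of_mem (diag_mem_grading X v)
  rw [grading_zero, Submodule.mem_span_range_iff_exists_fun] at hmemu hmemv
  obtain ⟨cu, hcu⟩ := hmemu
  obtain ⟨cv, hcv⟩ := hmemv
  have hA : ψ Du * ψ Dv = ∑ i, (cu i * cv i * (sigma (πf u) (πf v) : F)) •
      single i i (X (πf u + πf v) : Matrix (Fin ℓ) (Fin ℓ) F) := by
    rw [← hcu, ← hcv, sum_diag_mul]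
    refine Finset.sum_congr rfl fun i _ => ?_
    rw [hσ, ← smul_single, smul_smul]
  have hB : ψ Dv * ψ Du = ∑ i, (cv i * cu i * (sigma (πf v) (πf u) : F)) •
      single i i (X (πf u + πf v) : Matrix (Fin ℓ) (Fin ℓ) F) := by
    rw [← hcv, ← hcu, sum_diag_mul]
    refine Finset.sum_congr rfl fun i _ => ?_
    rw [hσ, ← smul_single, smul_smul, add_comm (πf v) (πf u)]
  have hds : ∀ (cF : F) (M : Matrix (Fin ℓ) (Fin ℓ) F),
      diagonal (fun _ : Fin k => cF • M) = cF • diagonal (fun _ : Fin k => M) := by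
    intro cF M
    ext p q
    by_cases hpq : p = q
    · subst hpq
      rw [Matrix.smul_apply, diagonal_apply_eq, diagonal_apply_eq]
    · rw [Matrix.smul_apply, diagonal_apply_ne _ hpq, diagonal_apply_ne _ hpq, smul_zero]
  have hrel : Du * Dv = (β u v : F) • (Dv * Du) := by
    rw [hDudef, hDvdef, diagonal_mul_diagonal, diagonal_mul_diagonal,
      show (fun i : Fin k => (X u : Matrix (Fin ℓ) (Fin ℓ) F) * (X v : Matrix (Fin ℓ) (Fin ℓ) F))
        = fun _ : Fin k => (β u v : F) • ((X v : Matrix (Fin ℓ) (Fin ℓ) F) * (X u : Matrix (Fin ℓ) (Fin ℓ) F))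
        from funext fun _ => hcomm u v, hds]
  have hABrel : ψ Du * ψ Dv = (β u v : F) • (ψ Dv * ψ Du) := by
    rw [← _root_.map_mul, ← _root_.map_mul, hrel, _root_.map_smul]
  rw [hA, hB, Finset.smul_sum] at hABrel
  have hsum : ∑ i, ((cu i * cv i * (sigma (πf u) (πf v) : F))
      - (β u v : F) * (cv i * cu i * (sigma (πf v) (πf u) : F))) •
      single i i (X (πf u + πf v) : Matrix (Fin ℓ) (Fin ℓ) F) = 0 := by
    have hterm : ∀ i : Fin k, ((cu i * cv i * (sigma (πf u) (πf v) : F))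
        - (β u v : F) * (cv i * cu i * (sigma (πf v) (πf u) : F))) •
        single i i (X (πf u + πf v) : Matrix (Fin ℓ) (Fin ℓ) F)
        = (cu i * cv i * (sigma (πf u) (πf v) : F)) •
            single i i (X (πf u + πf v) : Matrix (Fin ℓ) (Fin ℓ) F)
          - (β u v : F) • ((cv i * cu i * (sigma (πf v) (πf u) : F)) •
            single i i (X (πf u + πf v) : Matrix (Fin ℓ) (Fin ℓ) F)) := fun i => by
      rw [sub_smul, smul_smul]
    rw [Finset.sum_congr rfl (fun i _ => hterm i), Finset.sum_sub_distrib, hABrel, sub_self]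
  have hall := diag_sum_eq_zero (X_ne_zero X hl _) hsum
  have hne0 : ψ (Du * Dv) ≠ 0 := by
    intro h
    refine Units.ne_zero ((diagUnit X fun _ => u) * (diagUnit X fun _ => v)) (ψ.injective ?_)
    rw [map_zero]
    exact h
  have hex : ∃ i, cu i * cv i ≠ 0 := by
    by_contra hno
    push_neg at hno
    apply hne0
    rw [_root_.map_mul, hA]
    refine Finset.sum_eq_zero fun i _ => ?_
    rw [hno i, zero_mul, zero_smul]
  obtain ⟨i, hi⟩ := hex
  have h9 := sub_eq_zero.mp (hall i)
  have h10 : (sigma (πf u) (πf v) : F) = (β u v : F) * (sigma (πf v) (πf u) : F) := by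
    have h11 : cu i * cv i * (sigma (πf u) (πf v) : F)
        = cu i * cv i * ((β u v : F) * (sigma (πf v) (πf u) : F)) := by
      linear_combination h9
    exact mul_left_cancel₀ hi h11
  have h12 := beta_sigma X sigma hl hσ β hcomm (πf u) (πf v)
  ext
  have h13 : (β (πf u) (πf v) : F) * (sigma (πf v) (πf u) : F) = (sigma (πf u) (πf v) : F) := by
    exact_mod_cast congrArg Units.val h12
  rw [h10] at h13
  exact mul_right_cancel₀ (Units.ne_zero _) h13

theorem sum_smul_delta (e : Equiv.Perm (Fin k)) (x : ↥(sumZero k)) (j0 : Fin k) :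
    ∑ i, (x : Fin k → ℤ) i • δ (e i) (e j0) = permAut e x := by
  apply Subtype.ext
  have h1 : ((∑ i, (x : Fin k → ℤ) i • δ (e i) (e j0) : ↥(sumZero k)) : Fin k → ℤ)
      = ∑ i, (x : Fin k → ℤ) i • (Pi.single (e i) 1 - Pi.single (e j0) 1 : Fin k → ℤ) := by
    rw [AddSubmonoidClass.coe_finset_sum]
    exact Finset.sum_congr rfl fun i _ => rfl
  rw [h1]
  funext m
  rw [Finset.sum_apply]
  have hterm : ∀ i, ((x : Fin k → ℤ) i • (Pi.single (e i) 1 - Pi.single (e j0) 1 : Fin k → ℤ)) m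
      = (x : Fin k → ℤ) i * (Pi.single (e i) 1 : Fin k → ℤ) m
        - (x : Fin k → ℤ) i * (Pi.single (e j0) 1 : Fin k → ℤ) m := by
    intro i
    rw [Pi.smul_apply, Pi.sub_apply, smul_eq_mul, mul_sub]
  rw [Finset.sum_congr rfl fun i _ => hterm i, Finset.sum_sub_distrib]
  have hs1 : ∑ i, (x : Fin k → ℤ) i * (Pi.single (e i) 1 : Fin k → ℤ) m
      = (x : Fin k → ℤ) (e.symm m) := by
    rw [Finset.sum_eq_single (e.symm m)]
    · rw [Pi.single_apply, if_pos (show m = e (e.symm m) from (e.apply_symm_apply m).symm),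
        mul_one]
    · intro i _ hi
      rw [Pi.single_apply, if_neg, mul_zero]
      intro hm
      exact hi (by rw [hm, Equiv.symm_apply_apply])
    · simp
  have hs2 : ∑ i, (x : Fin k → ℤ) i * (Pi.single (e j0) 1 : Fin k → ℤ) m = 0 := by
    rw [← Finset.sum_mul, mem_sumZero.mp x.2, zero_mul]
  rw [hs1, hs2, sub_zero]
  rfl

theorem wsum_zero (x : ↥(sumZero k)) : wsum (fun _ : Fin k => (0 : T)) x = 0 := by
  unfold wsum
  simp

theorem wsum_perm (σ : Equiv.Perm (Fin k)) (s : Fin k → T) (x : ↥(sumZero k)) :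
    wsum (fun m => s (σ.symm m)) (permAut σ x) = wsum s x := by
  unfold wsum
  have h : ∀ i, ((permAut σ x : ↥(sumZero k)) : Fin k → ℤ) i • s (σ.symm i)
      = (x : Fin k → ℤ) (σ.symm i) • s (σ.symm i) := fun i => rfl
  rw [Finset.sum_congr rfl fun i _ => h i]
  exact Equiv.sum_comp σ.symm (fun m => (x : Fin k → ℤ) m • s m)

theorem classify (hl : 0 < ℓ) (hk : 0 < k) (hone : X 0 = 1)
    (sigma : T → T → Fˣ)
    (hσ : ∀ u v : T, (X u : Matrix (Fin ℓ) (Fin ℓ) F) * (X v : Matrix (Fin ℓ) (Fin ℓ) F)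
      = (sigma u v : F) • (X (u + v) : Matrix (Fin ℓ) (Fin ℓ) F))
    (β : T → T → Fˣ)
    (hcomm : ∀ u v : T, (X u : Matrix (Fin ℓ) (Fin ℓ) F) * (X v : Matrix (Fin ℓ) (Fin ℓ) F)
      = (β u v : F) • ((X v : Matrix (Fin ℓ) (Fin ℓ) F) * (X u : Matrix (Fin ℓ) (Fin ℓ) F)))
    (μ : AddAut (↥(sumZero k) × T)) (hμ : μ ∈ Wgroup (k := k) X) :
    ∃ (π : AddAut T) (σ : Equiv.Perm (Fin k)) (s : Fin k → T),
      (∀ u v : T, β (π u) (π v) = β u v) ∧ μ = nu s * kappa π σ := by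
  obtain ⟨ψ, hψ⟩ := hμ
  have hμinv : μ⁻¹ ∈ Wgroup (k := k) X := (Wgroup (k := k) X).inv_mem ⟨ψ, hψ⟩
  obtain ⟨ψ', hψ'⟩ := hμinv
  have hfc : ∀ t : T, (μ ((0 : ↥(sumZero k)), t)).1 = 0 := first_comp_zero X hl hk μ ψ hψ
  have hfcinv : ∀ t : T, (μ⁻¹ ((0 : ↥(sumZero k)), t)).1 = 0 :=
    first_comp_zero X hl hk μ⁻¹ ψ' hψ'
  -- the automorphism π of T
  let π : AddAut T := {
    toFun := fun t => (μ ((0 : ↥(sumZero k)), t)).2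
    invFun := fun t => (μ⁻¹ ((0 : ↥(sumZero k)), t)).2
    left_inv := by
      intro t
      have h1 : ((0 : ↥(sumZero k)), (μ ((0 : ↥(sumZero k)), t)).2)
          = μ ((0 : ↥(sumZero k)), t) := Prod.ext (hfc t).symm rfl
      show (μ⁻¹ ((0 : ↥(sumZero k)), (μ ((0 : ↥(sumZero k)), t)).2)).2 = t
      rw [h1]
      have h2 : μ⁻¹ (μ ((0 : ↥(sumZero k)), t)) = ((0 : ↥(sumZero k)), t) :=
        μ.symm_apply_apply _
      rw [h2]
    right_inv := by
      intro t
      have h1 : ((0 : ↥(sumZero k)), (μ⁻¹ ((0 : ↥(sumZero k)), t)).2)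
          = μ⁻¹ ((0 : ↥(sumZero k)), t) := Prod.ext (hfcinv t).symm rfl
      show (μ ((0 : ↥(sumZero k)), (μ⁻¹ ((0 : ↥(sumZero k)), t)).2)).2 = t
      rw [h1]
      have h2 : μ (μ⁻¹ ((0 : ↥(sumZero k)), t)) = ((0 : ↥(sumZero k)), t) :=
        μ.apply_symm_apply _
      rw [h2]
    map_add' := by
      intro t t'
      show (μ ((0 : ↥(sumZero k)), t + t')).2
          = (μ ((0 : ↥(sumZero k)), t)).2 + (μ ((0 : ↥(sumZero k)), t')).2
      have h1 : ((0 : ↥(sumZero k)), t + t')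
          = ((0 : ↥(sumZero k)), t) + ((0 : ↥(sumZero k)), t') := by
        rw [Prod.mk_add_mk, add_zero]
      rw [h1, map_add]
      rfl }
  have hπf : ∀ t : T, μ ((0 : ↥(sumZero k)), t) = ((0 : ↥(sumZero k)), π t) :=
    fun t => Prod.ext (hfc t) rfl
  have hπβ : ∀ u v : T, β (π u) (π v) = β u v :=
    beta_preserved X hl hk sigma hσ β hcomm μ ψ hψ (fun t => (μ ((0 : ↥(sumZero k)), t)).2) hπf
  rcases Nat.lt_or_ge k 2 with hk2 | hk2
  · -- k = 1
    have hk1 : k = 1 := by omega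
    subst hk1
    have hsub : ∀ x : ↥(sumZero 1), x = 0 := by
      intro x
      apply Subtype.ext
      funext i
      have hi : i = 0 := Fin.fin_one_eq_zero i
      have hx := mem_sumZero.mp x.2
      rw [Fin.sum_univ_one] at hx
      rw [hi]
      exact hx
    refine ⟨π, 1, fun _ => (0 : T), hπβ, AddEquiv.ext fun g => ?_⟩
    have hg : g = ((0 : ↥(sumZero 1)), g.2) := Prod.ext (hsub g.1) rfl
    have hL : μ g = ((0 : ↥(sumZero 1)), π g.2) := by
      rw [hg]
      exact hπf g.2
    have hR : (nu (fun _ : Fin 1 => (0 : T)) * kappa (k := 1) π 1) g = (g.1, π g.2) := by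
      show nu (fun _ : Fin 1 => (0 : T)) (kappa (k := 1) π 1 g) = _
      rw [kappa_apply, nu_apply]
      refine Prod.ext ?_ ?_
      · show permAut 1 g.1 = g.1
        rw [permAut_one]
        rfl
      · show π g.2 + wsum _ (permAut 1 g.1) = π g.2
        rw [wsum_zero, add_zero]
    rw [hL, hR, hsub g.1]
  · -- k ≥ 2
    have hroots0 := fun (i j : Fin k) (hij : i ≠ j) =>
      root_image X hl hk μ ψ hψ hfcinv i j hij (0 : T)
    choose a b hab hμ1 cu hcu using hroots0
    have hba : ∀ (i j l : Fin k) (hij : i ≠ j) (hjl : j ≠ l), b i j hij = a j l hjl := by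
      intro i j l hij hjl
      by_contra hne
      have hX00 : (X 0 : Matrix (Fin ℓ) (Fin ℓ) F) * (X 0 : Matrix (Fin ℓ) (Fin ℓ) F)
          = (X (0 : T) : Matrix (Fin ℓ) (Fin ℓ) F) := by
        rw [hone]
        simp
      have hEE : E X i j 0 * E X j l 0 = E X i l 0 := by
        rw [E_mul_same]
        show single i l ((X 0 : Matrix (Fin ℓ) (Fin ℓ) F) * (X 0 : Matrix (Fin ℓ) (Fin ℓ) F)) = _
        rw [hX00]
        rfl
      have happ : ψ (E X i j 0) * ψ (E X j l 0) = ψ (E X i l 0) := by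
        rw [← _root_.map_mul, hEE]
      rw [hcu i j hij, hcu j l hjl, Algebra.smul_mul_assoc, Algebra.mul_smul_comm,
        E_mul_ne X hne, smul_zero, smul_zero] at happ
      refine E_ne_zero X hl i l (0 : T) (ψ.injective ?_)
      rw [map_zero]
      exact happ.symm
    let i1 : Fin k := ⟨0, hk⟩
    let i2 : Fin k := ⟨1, hk2⟩
    have h12 : i1 ≠ i2 := by
      intro h
      have := congrArg Fin.val h
      simp [i1, i2] at this
    let nxt : Fin k → Fin k := fun i => if i = i1 then i2 else i1
    have hnxt : ∀ i, i ≠ nxt i := by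
      intro i
      by_cases h : i = i1
      · show i ≠ _
        rw [show nxt i = i2 from if_pos h, h]
        exact h12
      · show i ≠ _
        rw [show nxt i = i1 from if_neg h]
        exact h
    let σf : Fin k → Fin k := fun i => a i (nxt i) (hnxt i)
    have hbfix : ∀ (i j : Fin k) (hij : i ≠ j), b i j hij = σf j := fun i j hij =>
      hba i j (nxt j) hij (hnxt j)
    have hafix : ∀ (i j : Fin k) (hij : i ≠ j), a i j hij = σf i := by
      intro i j hij
      have h1 := hba (nxt i) i j (Ne.symm (hnxt i)) hij
      have h2 := hbfix (nxt i) i (Ne.symm (hnxt i))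
      rw [← h1, h2]
    have hinj : Function.Injective σf := by
      intro i j hsame
      by_contra hij
      have hthis := hab i j hij
      rw [hafix i j hij, hbfix i j hij] at hthis
      exact hthis hsame
    let σ : Equiv.Perm (Fin k) := Equiv.ofBijective σf (Finite.injective_iff_bijective.mp hinj)
    have hσapp : ∀ i, σ i = σf i := fun i => rfl
    have hμδ : ∀ (i j : Fin k) (t : T), (μ (δ i j, t)).1 = δ (σ i) (σ j) := by
      intro i j t
      by_cases hij : i = j
      · subst hij
        rw [δ_same, δ_same]
        exact hfc t
      · have hsplit : ((δ i j, t) : ↥(sumZero k) × T) = (δ i j, (0 : T)) + ((0 : ↥(sumZero k)), t) := by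
          rw [Prod.mk_add_mk, add_zero, zero_add]
        rw [hsplit, map_add, Prod.fst_add, hfc t, add_zero, hμ1 i j hij,
          hafix i j hij, hbfix i j hij]
        rfl
    let s : Fin k → T := fun i => (μ (δ i i1, (0 : T))).2
    have hform : ∀ (x : ↥(sumZero k)) (t : T), μ (x, t) = (permAut σ x, π t + wsum s x) := by
      intro x t
      have hxsum : ((x, (0 : T)) : ↥(sumZero k) × T)
          = ∑ i, (x : Fin k → ℤ) i • ((δ i i1, (0 : T)) : ↥(sumZero k) × T) := by
        refine Prod.ext ?_ ?_
        · rw [Prod.fst_sum]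
          have hterm : ∀ i : Fin k,
              ((x : Fin k → ℤ) i • ((δ i i1, (0 : T)) : ↥(sumZero k) × T)).1
              = (x : Fin k → ℤ) i • δ i i1 := fun i => rfl
          rw [Finset.sum_congr rfl fun i _ => hterm i]
          have := sum_smul_delta (1 : Equiv.Perm (Fin k)) x i1
          rw [permAut_one] at this
          exact this.symm
        · rw [Prod.snd_sum]
          have hterm : ∀ i : Fin k,
              ((x : Fin k → ℤ) i • ((δ i i1, (0 : T)) : ↥(sumZero k) × T)).2
              = (0 : T) := fun i => by
            rw [Prod.smul_snd]
            exact smul_zero _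
          rw [Finset.sum_congr rfl fun i _ => hterm i]
          simp
      have hx0 : μ (x, (0 : T)) = (permAut σ x, wsum s x) := by
        rw [hxsum, map_sum]
        have hterm : ∀ i : Fin k, μ ((x : Fin k → ℤ) i • ((δ i i1, (0 : T)) : ↥(sumZero k) × T))
            = (x : Fin k → ℤ) i • ((δ (σ i) (σ i1), s i) : ↥(sumZero k) × T) := by
          intro i
          rw [map_zsmul]
          congr 1
          exact Prod.ext (hμδ i i1 0) rfl
        rw [Finset.sum_congr rfl fun i _ => hterm i]
        refine Prod.ext ?_ ?_
        · rw [Prod.fst_sum]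
          have hterm2 : ∀ i : Fin k,
              ((x : Fin k → ℤ) i • ((δ (σ i) (σ i1), s i) : ↥(sumZero k) × T)).1
              = (x : Fin k → ℤ) i • δ (σ i) (σ i1) := fun i => rfl
          rw [Finset.sum_congr rfl fun i _ => hterm2 i]
          exact sum_smul_delta σ x i1
        · rw [Prod.snd_sum]
          rfl
      have hsplit : ((x, t) : ↥(sumZero k) × T) = (x, (0 : T)) + ((0 : ↥(sumZero k)), t) := by
        rw [Prod.mk_add_mk, add_zero, zero_add]
      rw [hsplit, map_add, hx0, hπf t, Prod.mk_add_mk, add_zero]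
      rw [add_comm (wsum s x) (π t)]
    refine ⟨π, σ, fun m => s (σ.symm m), hπβ, AddEquiv.ext fun g => ?_⟩
    have hg : μ g = μ (g.1, g.2) := rfl
    rw [hg, hform g.1 g.2]
    show _ = nu _ (kappa π σ g)
    rw [kappa_apply, nu_apply]
    refine Prod.ext rfl ?_
    show π g.2 + wsum s g.1 = π g.2 + wsum (fun m => s (σ.symm m)) (permAut σ g.1)
    rw [wsum_perm]

end Converse

section PPred

/-- characterization of the `T`-automorphism part -/
def Pfst {T : Type*} [AddCommGroup T] (μ : AddAut (↥(sumZero k) × T)) (π : AddAut T) : Prop :=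
  ∀ t : T, μ ((0 : ↥(sumZero k)), t) = ((0 : ↥(sumZero k)), π t)

/-- characterization of the permutation part -/
def Psnd {T : Type*} [AddCommGroup T] (μ : AddAut (↥(sumZero k) × T))
    (σ : Equiv.Perm (Fin k)) : Prop :=
  ∀ (i j : Fin k) (t : T), (μ (δ i j, t)).1 = δ (σ i) (σ j)

theorem wsum_zero_x {T : Type*} [AddCommGroup T] (s : Fin k → T) :
    wsum s (0 : ↥(sumZero k)) = 0 := by
  unfold wsum
  have h : ∀ i : Fin k, ((0 : ↥(sumZero k)) : Fin k → ℤ) i • s i = 0 := fun i => by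
    show (0 : ℤ) • s i = 0
    rw [zero_smul]
  rw [Finset.sum_congr rfl fun i _ => h i]
  simp

theorem P_of_decomp {T : Type*} [AddCommGroup T] (π : AddAut T) (σ : Equiv.Perm (Fin k))
    (s : Fin k → T) :
    Pfst (nu s * kappa π σ) π ∧ Psnd (nu s * kappa π σ) σ := by
  constructor
  · intro t
    show nu s (kappa π σ ((0 : ↥(sumZero k)), t)) = _
    rw [kappa_apply, nu_apply]
    have h0 : permAut σ (0 : ↥(sumZero k)) = 0 := map_zero _
    refine Prod.ext ?_ ?_
    · show permAut σ (0 : ↥(sumZero k)) = 0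
      exact h0
    · show π t + wsum s (permAut σ (0 : ↥(sumZero k))) = π t
      rw [h0, wsum_zero_x, add_zero]
  · intro i j t
    show (nu s (kappa π σ (δ i j, t))).1 = _
    rw [kappa_apply, nu_apply]
    exact permAut_δ σ i j

theorem P_unique {T : Type*} [AddCommGroup T] (hk : 0 < k)
    {μ : AddAut (↥(sumZero k) × T)} {π π' : AddAut T} {σ σ' : Equiv.Perm (Fin k)}
    (h1 : Pfst μ π) (h2 : Psnd μ σ) (h1' : Pfst μ π') (h2' : Psnd μ σ') :
    π = π' ∧ σ = σ' := by
  constructor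
  · refine AddEquiv.ext fun t => ?_
    have := (h1 t).symm.trans (h1' t)
    exact congrArg Prod.snd this
  · rcases Nat.lt_or_ge k 2 with hk2 | hk2
    · have hk1 : k = 1 := by omega
      subst hk1
      refine Equiv.ext fun i => ?_
      have hi : i = 0 := Fin.fin_one_eq_zero i
      have h3 : σ i = 0 := Fin.fin_one_eq_zero _
      have h4 : σ' i = 0 := Fin.fin_one_eq_zero _
      rw [h3, h4]
    · refine Equiv.ext fun i => ?_
      have hex : ∃ j : Fin k, j ≠ i := by
        rcases Nat.lt_or_ge 0 1 with h | h
        · by_cases hi0 : i = ⟨0, hk⟩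
          · exact ⟨⟨1, hk2⟩, by
              rw [hi0]
              intro hc
              have := congrArg Fin.val hc
              simp at this⟩
          · exact ⟨⟨0, hk⟩, fun hc => hi0 hc.symm⟩
        · omega
      obtain ⟨j, hj⟩ := hex
      have heq := (h2 i j 0).symm.trans (h2' i j 0)
      have hne : σ i ≠ σ j := fun hc => (Ne.symm hj) (σ.injective hc)
      exact ((δ_eq_δ_iff hne).1 heq).1

theorem P_mul {T : Type*} [AddCommGroup T] (hk : 0 < k)
    {μ ν : AddAut (↥(sumZero k) × T)} {π π' : AddAut T} {σ σ' : Equiv.Perm (Fin k)}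
    (h1 : Pfst μ π) (h2 : Psnd μ σ) (h1' : Pfst ν π') (h2' : Psnd ν σ') :
    Pfst (μ * ν) (π * π') ∧ Psnd (μ * ν) (σ * σ') := by
  constructor
  · intro t
    show μ (ν ((0 : ↥(sumZero k)), t)) = _
    rw [h1' t, h1 (π' t)]
    rfl
  · intro i j t
    show (μ (ν (δ i j, t))).1 = _
    have hν : ν (δ i j, t) = (δ (σ' i) (σ' j), (ν (δ i j, t)).2) :=
      Prod.ext (h2' i j t) rfl
    rw [hν, h2 (σ' i) (σ' j) _]
    rfl

theorem P_one {T : Type*} [AddCommGroup T] :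
    Pfst (1 : AddAut (↥(sumZero k) × T)) (1 : AddAut T) ∧
      Psnd (1 : AddAut (↥(sumZero k) × T)) (1 : Equiv.Perm (Fin k)) :=
  ⟨fun _ => rfl, fun _ _ _ => rfl⟩

theorem P_kappa {T : Type*} [AddCommGroup T] (π : AddAut T) (σ : Equiv.Perm (Fin k)) :
    Pfst (kappa π σ) π ∧ Psnd (kappa π σ) σ := by
  constructor
  · intro t
    rw [kappa_apply]
    refine Prod.ext ?_ rfl
    exact map_zero _
  · intro i j t
    rw [kappa_apply]
    exact permAut_δ σ i j

theorem P_nu {T : Type*} [AddCommGroup T] (s : Fin k → T) :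
    Pfst (nu s) (1 : AddAut T) ∧ Psnd (nu s) (1 : Equiv.Perm (Fin k)) := by
  constructor
  · intro t
    rw [nu_apply, wsum_zero_x, add_zero]
    rfl
  · intro i j t
    rw [nu_apply]
    rfl

theorem wsum_sum {T : Type*} [AddCommGroup T] (s s' : Fin k → T) (x : ↥(sumZero k)) :
    wsum (s + s') x = wsum s x + wsum s' x := by
  unfold wsum
  rw [← Finset.sum_add_distrib]
  refine Finset.sum_congr rfl fun i _ => ?_
  show (x : Fin k → ℤ) i • (s i + s' i) = _
  rw [smul_add]

theorem nu_add {T : Type*} [AddCommGroup T] (s s' : Fin k → T) :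
    nu (s + s') = nu s * nu s' := by
  refine AddEquiv.ext fun g => ?_
  show _ = nu s (nu s' g)
  rw [nu_apply, nu_apply, nu_apply, wsum_sum]
  refine Prod.ext rfl ?_
  show g.2 + (wsum s g.1 + wsum s' g.1) = g.2 + wsum s' g.1 + wsum s g.1
  abel

theorem nu_zero_eq_one {T : Type*} [AddCommGroup T] :
    nu (0 : Fin k → T) = 1 := by
  refine AddEquiv.ext fun g => ?_
  rw [nu_apply]
  refine Prod.ext rfl ?_
  show g.2 + wsum (0 : Fin k → T) g.1 = g.2
  have : wsum (0 : Fin k → T) g.1 = 0 := by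
    unfold wsum
    simp
  rw [this, add_zero]

theorem nu_eq_one_iff {T : Type*} [AddCommGroup T] (hk : 0 < k) (s : Fin k → T) :
    nu s = 1 ↔ ∃ t : T, (fun _ : Fin k => t) = s := by
  constructor
  · intro h
    refine ⟨s ⟨0, hk⟩, ?_⟩
    funext i
    have h2 := congrArg (fun (f : AddAut (↥(sumZero k) × T)) => (f (δ i ⟨0, hk⟩, 0)).2) h
    simp only [nu_apply] at h2
    have h3 : wsum s (δ i ⟨0, hk⟩) = s i - s ⟨0, hk⟩ := wsum_single_sub s _ rfl
    rw [h3] at h2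
    have h4 : (0 : T) + (s i - s ⟨0, hk⟩) = 0 := h2
    have : s i = s ⟨0, hk⟩ := by
      rw [zero_add, sub_eq_zero] at h4
      exact h4
    rw [this]
  · rintro ⟨t, rfl⟩
    refine AddEquiv.ext fun g => ?_
    rw [nu_apply]
    refine Prod.ext rfl ?_
    show g.2 + wsum _ g.1 = g.2
    have : wsum (fun _ : Fin k => t) g.1 = 0 := by
      unfold wsum
      rw [← Finset.sum_smul, mem_sumZero.mp g.1.2, zero_smul]
    rw [this, add_zero]

end PPred

/-- `Multiplicative (Additive M) ≃* M` -/
def multAddSelf {M : Type*} [MulOneClass M] : Multiplicative (Additive M) ≃* M where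
  toFun x := Additive.toMul (Multiplicative.toAdd x)
  invFun m := Multiplicative.ofAdd (Additive.ofMul m)
  left_inv _ := rfl
  right_inv _ := rfl
  map_mul' _ _ := rfl

end WeylAux

set_option maxHeartbeats 2000000 in
theorem weyl_group_of_fine_grading_on_matrix_algebra
    {F : Type*} [Field F] [IsAlgClosed F] {ℓ k : ℕ} (hℓ : 0 < ℓ) (hk : 0 < k)
    {T : Type*} [AddCommGroup T] [Fintype T]
    (X : T → (Matrix (Fin ℓ) (Fin ℓ) F)ˣ)
    (b : Module.Basis T F (Matrix (Fin ℓ) (Fin ℓ) F))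
    (hb : ∀ t : T, b t = (X t : Matrix (Fin ℓ) (Fin ℓ) F))
    (hone : X 0 = 1)
    (hgrade : ∀ u v : T, ∃ c : Fˣ,
      (X u : Matrix (Fin ℓ) (Fin ℓ) F) * (X v : Matrix (Fin ℓ) (Fin ℓ) F)
        = (c : F) • (X (u + v) : Matrix (Fin ℓ) (Fin ℓ) F))
    (β : T → T → Fˣ)
    (hcomm : ∀ u v : T,
      (X u : Matrix (Fin ℓ) (Fin ℓ) F) * (X v : Matrix (Fin ℓ) (Fin ℓ) F)
        = (β u v : F) • ((X v : Matrix (Fin ℓ) (Fin ℓ) F) * (X u : Matrix (Fin ℓ) (Fin ℓ) F)))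
    (hnondeg : ∀ u : T, (∀ v : T, β u v = 1) → u = 0) :
    ∃ (W : Subgroup (AddAut (↥(sumZero k) × T))) (B : Subgroup (AddAut T)),
      -- B is the group Aut(T,β)
      (∀ π : AddAut T, π ∈ B ↔ ∀ u v : T, β (π u) (π v) = β u v) ∧
      -- W is the Weyl group of Γ_M(D,k), acting on the universal group ℤ₀^k × T
      (∀ μ : AddAut (↥(sumZero k) × T), μ ∈ W ↔
        ∃ ψ : Matrix (Fin k) (Fin k) (Matrix (Fin ℓ) (Fin ℓ) F)
              ≃ₐ[F] Matrix (Fin k) (Fin k) (Matrix (Fin ℓ) (Fin ℓ) F),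
          ∀ g, Submodule.map ψ.toLinearMap (matrixFineGrading X g)
                 = matrixFineGrading X (μ g)) ∧
      -- W ≅ (T^k/T) ⋊ (Aut(T,β) × Sym(k)), as an internal semidirect product
      (∃ N H : Subgroup ↥W, N.Normal ∧ N ⊓ H = ⊥ ∧ N ⊔ H = ⊤ ∧
        Nonempty (↥N ≃* Multiplicative
          ((Fin k → T) ⧸ (AddMonoidHom.range
            (AddMonoidHom.mk' (fun t => (fun _ : Fin k => t)) (fun _ _ => rfl))))) ∧
        Nonempty (↥H ≃* ↥B × Equiv.Perm (Fin k))) := by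
  classical
  obtain ⟨sigma, hσ⟩ : ∃ σf : T → T → Fˣ, ∀ u v : T,
      (X u : Matrix (Fin ℓ) (Fin ℓ) F) * (X v : Matrix (Fin ℓ) (Fin ℓ) F)
        = (σf u v : F) • (X (u + v) : Matrix (Fin ℓ) (Fin ℓ) F) :=
    ⟨fun u v => (hgrade u v).choose, fun u v => (hgrade u v).choose_spec⟩
  set W := WeylAux.Wgroup (k := k) X with hWdef
  let B : Subgroup (AddAut T) :=
  { carrier := {π : AddAut T | ∀ u v : T, β (π u) (π v) = β u v}
    one_mem' := fun _ _ => rfl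
    mul_mem' := by
      intro π1 π2 h1 h2 u v
      exact (h1 (π2 u) (π2 v)).trans (h2 u v)
    inv_mem' := by
      intro π h u v
      have h2 := h (π⁻¹ u) (π⁻¹ v)
      have e1 : π (π⁻¹ u) = u := π.apply_symm_apply u
      have e2 : π (π⁻¹ v) = v := π.apply_symm_apply v
      rw [e1, e2] at h2
      exact h2.symm }
  refine ⟨W, B, fun π => Iff.rfl, fun μ => Iff.rfl, ?_⟩
  -- decomposition data
  have hmemP : ∀ μ : ↥W, ∃ (π : AddAut T) (σp : Equiv.Perm (Fin k)) (s : Fin k → T),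
      (∀ u v : T, β (π u) (π v) = β u v) ∧
        (μ : AddAut (↥(sumZero k) × T)) = WeylAux.nu s * WeylAux.kappa π σp :=
    fun μ => WeylAux.classify X hℓ hk hone sigma hσ β hcomm μ μ.2
  choose pi sg sv hpib hdec using hmemP
  have hP : ∀ μ : ↥W, WeylAux.Pfst (μ : AddAut (↥(sumZero k) × T)) (pi μ) ∧
      WeylAux.Psnd (μ : AddAut (↥(sumZero k) × T)) (sg μ) := fun μ => by
    rw [hdec μ]
    exact WeylAux.P_of_decomp _ _ _
  -- the projection homomorphism ρ
  let ρ : ↥W →* (↥B × Equiv.Perm (Fin k)) :=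
  { toFun := fun μ => (⟨pi μ, hpib μ⟩, sg μ)
    map_one' := by
      have h1 := hP 1
      have h0 := WeylAux.P_one (k := k) (T := T)
      have huni := WeylAux.P_unique hk h1.1 h1.2 h0.1 h0.2
      exact Prod.ext (Subtype.ext huni.1) huni.2
    map_mul' := by
      intro μ ν
      have h1 := hP (μ * ν)
      have hμ2 := hP μ
      have hν2 := hP ν
      have h2 := WeylAux.P_mul hk hμ2.1 hμ2.2 hν2.1 hν2.2
      have huni := WeylAux.P_unique hk h1.1 h1.2 h2.1 h2.2
      exact Prod.ext (Subtype.ext huni.1) huni.2 }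
  -- the section homomorphism
  have hmemK : ∀ (π : AddAut T), (∀ u v : T, β (π u) (π v) = β u v) →
      ∀ σp : Equiv.Perm (Fin k), WeylAux.kappa π σp ∈ W := by
    intro π hπ σp
    obtain ⟨φ, dφ, hφ⟩ := WeylAux.exists_phi X hℓ b hb hone sigma hσ β hcomm π hπ
    exact WeylAux.kappa_mem X hℓ π σp φ dφ hφ
  have hkapone : WeylAux.kappa (1 : AddAut T) (1 : Equiv.Perm (Fin k)) = 1 := by
    refine AddEquiv.ext fun g => ?_
    rw [WeylAux.kappa_apply, WeylAux.permAut_one]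
    rfl
  let sH : (↥B × Equiv.Perm (Fin k)) →* ↥W :=
  { toFun := fun p => ⟨WeylAux.kappa (p.1 : AddAut T) p.2, hmemK p.1 p.1.2 p.2⟩
    map_one' := Subtype.ext hkapone
    map_mul' := fun p q => Subtype.ext (WeylAux.kappa_mul _ _ _ _) }
  have hρs : ∀ p, ρ (sH p) = p := by
    intro p
    have hPk := WeylAux.P_kappa (k := k) (p.1 : AddAut T) p.2
    have h1 := hP (sH p)
    have huni := WeylAux.P_unique hk h1.1 h1.2 hPk.1 hPk.2
    exact Prod.ext (Subtype.ext huni.1) huni.2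
  have hinf : ρ.ker ⊓ sH.range = ⊥ := by
    rw [eq_bot_iff]
    rintro x ⟨hker, p, rfl⟩
    have hp1 : p = 1 := by
      rw [← hρs p]
      exact hker
    rw [hp1, _root_.map_one]
    exact Subgroup.one_mem ⊥
  have hsup : ρ.ker ⊔ sH.range = ⊤ := by
    rw [eq_top_iff]
    intro μ _
    have hmem1 : μ * (sH (ρ μ))⁻¹ ∈ ρ.ker := by
      rw [MonoidHom.mem_ker, _root_.map_mul, _root_.map_inv, hρs, mul_inv_cancel]
    have hdec2 : μ = (μ * (sH (ρ μ))⁻¹) * sH (ρ μ) := by group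
    rw [hdec2]
    exact Subgroup.mul_mem_sup hmem1 ⟨ρ μ, rfl⟩
  -- the kernel is T^k/T
  let Φ : Multiplicative (Fin k → T) →* ↥W :=
  { toFun := fun s => ⟨WeylAux.nu (Multiplicative.toAdd s),
      WeylAux.nu_mem X hℓ hone sigma hσ _⟩
    map_one' := Subtype.ext WeylAux.nu_zero_eq_one
    map_mul' := fun s s' => Subtype.ext (WeylAux.nu_add _ _) }
  have hΦker : ∀ s, Φ s ∈ ρ.ker := by
    intro s
    rw [MonoidHom.mem_ker]
    have hPn := WeylAux.P_nu (k := k) (Multiplicative.toAdd s)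
    have h1 := hP (Φ s)
    have huni := WeylAux.P_unique hk h1.1 h1.2 hPn.1 hPn.2
    exact Prod.ext (Subtype.ext huni.1) huni.2
  let Φ' : Multiplicative (Fin k → T) →* ↥(ρ.ker) := Φ.codRestrict ρ.ker hΦker
  have hΦsurj : Function.Surjective Φ' := by
    rintro ⟨ν, hν⟩
    have hρν : ρ ν = 1 := hν
    have hpi1 : pi ν = 1 := congrArg (fun p : ↥B × Equiv.Perm (Fin k) => (p.1 : AddAut T)) hρν
    have hsg1 : sg ν = 1 := congrArg Prod.snd hρν
    have hval : (ν : AddAut (↥(sumZero k) × T)) = WeylAux.nu (sv ν) := by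
      rw [hdec ν, hpi1, hsg1, hkapone, mul_one]
    exact ⟨Multiplicative.ofAdd (sv ν), Subtype.ext (Subtype.ext hval.symm)⟩
  let Φa : (Fin k → T) →+ Additive ↥(ρ.ker) :=
  { toFun := fun s => Additive.ofMul (Φ' (Multiplicative.ofAdd s))
    map_zero' := by
      show Additive.ofMul (Φ' (Multiplicative.ofAdd (0 : Fin k → T))) = 0
      rw [show Multiplicative.ofAdd (0 : Fin k → T) = 1 from rfl, _root_.map_one]
      rfl
    map_add' := fun s s' => by
      show Additive.ofMul (Φ' (Multiplicative.ofAdd (s + s'))) = _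
      rw [show Multiplicative.ofAdd (s + s')
        = Multiplicative.ofAdd s * Multiplicative.ofAdd s' from rfl, _root_.map_mul]
      rfl }
  have hΦasurj : Function.Surjective Φa := by
    intro y
    obtain ⟨x, hx⟩ := hΦsurj (Additive.toMul y)
    exact ⟨Multiplicative.toAdd x, congrArg Additive.ofMul hx⟩
  have hkerΦa : Φa.ker = AddMonoidHom.range
      (AddMonoidHom.mk' (fun t => (fun _ : Fin k => t)) (fun _ _ => rfl)) := by
    ext s
    rw [AddMonoidHom.mem_ker, AddMonoidHom.mem_range]
    constructor
    · intro h
      have h2 : Φ' (Multiplicative.ofAdd s) = 1 := h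
      have h3 : WeylAux.nu s = 1 := congrArg
        (fun z : ↥(ρ.ker) => ((z : ↥W) : AddAut (↥(sumZero k) × T))) h2
      obtain ⟨t, ht⟩ := (WeylAux.nu_eq_one_iff hk s).1 h3
      exact ⟨t, ht⟩
    · rintro ⟨t, rfl⟩
      have h1 : WeylAux.nu ((AddMonoidHom.mk' (fun t => (fun _ : Fin k => t))
          (fun _ _ => rfl)) t) = 1 := (WeylAux.nu_eq_one_iff hk _).2 ⟨t, rfl⟩
      show Additive.ofMul (Φ' (Multiplicative.ofAdd _)) = 0
      have h2 : Φ' (Multiplicative.ofAdd ((AddMonoidHom.mk' (fun t => (fun _ : Fin k => t))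
          (fun _ _ => rfl)) t)) = 1 := Subtype.ext (Subtype.ext h1)
      rw [h2]
      rfl
  let e1 := QuotientAddGroup.quotientKerEquivOfSurjective Φa hΦasurj
  let e2 := QuotientAddGroup.quotientAddEquivOfEq hkerΦa.symm
  refine ⟨ρ.ker, sH.range, MonoidHom.normal_ker ρ, hinf, hsup,
    ⟨((AddEquiv.toMultiplicative (e2.trans e1)).trans WeylAux.multAddSelf).symm⟩, ?_⟩
  have hsinj : Function.Injective sH := fun p q hpq => by
    rw [← hρs p, ← hρs q, hpq]
  exact ⟨(MonoidHom.ofInjective hsinj).symm⟩
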